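/- arXiv:2310.02796 — 5 statements merged into one kernel-verified Lean document; each statement's English description precedes it below -/
import Mathlib

section
/- Let φ: ℤ⁺ → ℂ be periodic with period m, let f(n) := ∏_{i=1}^{n} φ(i), let g: ℤ⁺ → ℂ be periodic with period m, and define F(n) := ∑_{j=1}^{n} f(j)·g(j). If |f(m)| < 1, then the limit F(∞) := lim_{n→∞} F(n) exists and equals F(m)/(1 − f(m)). -/
open Filter

/-- If `φ, g : ℤ⁺ → ℂ` are periodic with period `m`, `f(n) = ∏_{i=1}^n φ(i)`,
`F(n) = ∑_{j=1}^n f(j) g(j)`, and `|f(m)| < 1`, then `F(∞) = lim_n F(n)` exists and equals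
`F(m)/(1 - f(m))`. -/
theorem periodic_summatory_limit (m : ℕ) (hm : 1 ≤ m) (φ g : ℕ → ℂ)
    (hφ : ∀ j r : ℕ, 1 ≤ r → r ≤ m → φ (m * j + r) = φ r)
    (hg : ∀ j r : ℕ, 1 ≤ r → r ≤ m → g (m * j + r) = g r)
    (f F : ℕ → ℂ)
    (hf : ∀ n, f n = ∏ i ∈ Finset.Icc 1 n, φ i)
    (hF : ∀ n, F n = ∑ j ∈ Finset.Icc 1 n, f j * g j)
    (h1 : ‖f m‖ < 1) :
    Tendsto F atTop (nhds (F m / (1 - f m))) := by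
  haveI : NeZero m := ⟨Nat.one_le_iff_ne_zero.mp hm⟩
  set c : ℝ := ‖f m‖ with hc
  have hc0 : 0 ≤ c := norm_nonneg _
  -- decomposition of any positive integer
  have hdecomp : ∀ n : ℕ, n + 1 = m * (n / m) + (n % m + 1) := by
    intro n
    have := Nat.div_add_mod n m
    omega
  have hrle : ∀ n : ℕ, n % m + 1 ≤ m := fun n => Nat.mod_lt n (Nat.lt_of_lt_of_le Nat.zero_lt_one hm)
  -- φ is fully periodic on positives
  have hφp : ∀ n : ℕ, φ (n + 1 + m) = φ (n + 1) := by
    intro n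
    have h1' := hφ (n / m) (n % m + 1) (Nat.le_add_left 1 _) (hrle n)
    have h2' := hφ (n / m + 1) (n % m + 1) (Nat.le_add_left 1 _) (hrle n)
    have e1 : m * (n / m) + (n % m + 1) = n + 1 := (hdecomp n).symm
    have e2 : m * (n / m + 1) + (n % m + 1) = n + 1 + m := by
      have := hdecomp n; ring_nf; omega
    rw [e1] at h1'
    rw [e2] at h2'
    rw [h1', h2']
  -- f is multiplicative across periods
  have hfadd : ∀ n : ℕ, f (n + m) = f n * f m := by
    intro n
    induction n with
    | zero =>
      simp [hf 0, hf m]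
    | succ n ih =>
      have e : n + 1 + m = (n + m) + 1 := by omega
      rw [e, hf ((n + m) + 1),
        Finset.prod_Icc_succ_top (by omega : 1 ≤ (n + m) + 1), ← hf (n + m), ih]
      have : φ (n + m + 1) = φ (n + 1) := by
        have := hφp n; rw [show n + 1 + m = n + m + 1 by omega] at this; exact this
      rw [this, hf (n + 1), Finset.prod_Icc_succ_top (by omega : 1 ≤ n + 1), ← hf n]
      ring
  have hfpow : ∀ q n : ℕ, f (m * q + n) = f m ^ q * f n := by
    intro q
    induction q with
    | zero => intro n; simp
    | succ q ih =>
      intro n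
      have e : m * (q + 1) + n = (m * q + n) + m := by ring
      rw [e, hfadd, ih, pow_succ]
      ring
  -- the window sum over one period
  have hFadd : ∀ k : ℕ, F (m * k + m) = F (m * k) + f m ^ k * F m := by
    intro k
    have e1 : Finset.Icc 1 (m * k + m) = Finset.Ioc 0 (m * k + m) := by
      ext x; simp [Nat.lt_iff_add_one_le]
    have e2 : Finset.Icc 1 (m * k) = Finset.Ioc 0 (m * k) := by
      ext x; simp [Nat.lt_iff_add_one_le]
    rw [hF (m * k + m), hF (m * k), e1, e2,
      ← Finset.sum_Ioc_consecutive _ (Nat.zero_le (m * k)) (Nat.le_add_right (m * k) m)]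
    congr 1
    have himg : Finset.Ioc (m * k) (m * k + m) = (Finset.Ioc 0 m).image (m * k + ·) := by
      rw [Finset.image_add_left_Ioc]
      simp
    rw [himg, Finset.sum_image (by intro x _ y _ h; simp only at h; omega)]
    rw [hF m, Finset.mul_sum]
    apply Finset.sum_congr rfl
    intro r hr
    simp only [Finset.mem_Icc, Finset.mem_Ioc] at hr
    have hr1 : 1 ≤ r := hr.1
    have hrm : r ≤ m := hr.2
    rw [hfpow k r, hg k r hr1 hrm]
    ring
  -- partial sums at multiples of m are geometric
  have hFk : ∀ k : ℕ, F (m * k) = (∑ q ∈ Finset.range k, f m ^ q) * F m := by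
    intro k
    induction k with
    | zero => simp [hF 0]
    | succ k ih =>
      rw [show m * (k + 1) = m * k + m by ring, hFadd, ih, Finset.sum_range_succ]
      ring
  -- the summand sequence
  set a : ℕ → ℂ := fun j => if j = 0 then 0 else f j * g j with ha
  have hsub : ∀ n : ℕ, Finset.Icc 1 n ⊆ Finset.range (n + 1) := by
    intro n x; simp only [Finset.mem_Icc, Finset.mem_range]; omega
  have hFa : ∀ n, F n = ∑ j ∈ Finset.range (n + 1), a j := by
    intro n
    calc F n = ∑ j ∈ Finset.Icc 1 n, a j := by
          rw [hF n]
          apply Finset.sum_congr rfl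
          intro j hj
          simp only [Finset.mem_Icc] at hj
          simp [ha, Nat.one_le_iff_ne_zero.mp hj.1]
      _ = ∑ j ∈ Finset.range (n + 1), a j := by
          apply Finset.sum_subset (hsub n)
          intro x hx hnx
          simp only [Finset.mem_range] at hx
          simp only [Finset.mem_Icc, not_and, not_le] at hnx
          have hx0 : x = 0 := by omega
          simp [ha, hx0]
  -- bound constant
  set C : ℝ := ∑ r ∈ Finset.Icc 1 m, ‖f r * g r‖ with hCdef
  have hC0 : 0 ≤ C := Finset.sum_nonneg fun _ _ => norm_nonneg _
  have hC : ∀ r, 1 ≤ r → r ≤ m → ‖f r * g r‖ ≤ C := by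
    intro r h1r hrm
    exact Finset.single_le_sum (f := fun r => ‖f r * g r‖) (fun _ _ => norm_nonneg _)
      (Finset.mem_Icc.mpr ⟨h1r, hrm⟩)
  -- summability of the majorant
  have hmaj : Summable (fun j : ℕ => C * c ^ (j / m)) := by
    rw [← (Nat.divModEquiv m).symm.summable_iff]
    have heq : (fun j : ℕ => C * c ^ (j / m)) ∘ (Nat.divModEquiv m).symm
        = fun p : ℕ × Fin m => (C * c ^ p.1) * 1 := by
      funext p
      simp only [Function.comp_apply, Nat.divModEquiv, Equiv.coe_fn_symm_mk, mul_one]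
      congr 2
      rw [mul_comm, Nat.mul_add_div (by omega), Nat.div_eq_of_lt p.2.is_lt, add_zero]
    rw [heq]
    have hgeo : Summable (fun q : ℕ => C * c ^ q) :=
      (summable_geometric_of_lt_one hc0 h1).mul_left C
    have hone : Summable (fun _ : Fin m => (1 : ℝ)) := Summable.of_finite
    exact hgeo.mul_of_nonneg hone (Pi.le_def.mpr fun q => mul_nonneg hC0 (pow_nonneg hc0 q))
      (Pi.le_def.mpr fun _ => zero_le_one)
  have hmaj' : Summable (fun j : ℕ => C * c ^ ((j - 1) / m)) := by
    apply (summable_nat_add_iff 1).mp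
    simpa using hmaj
  -- summability of a
  have hsa : Summable a := by
    apply Summable.of_norm_bounded hmaj'
    intro j
    rcases Nat.eq_zero_or_pos j with hj | hj
    · simp [ha, hj, hC0]
    · have hj0 : j ≠ 0 := by omega
      have hj1 : j = m * ((j - 1) / m) + ((j - 1) % m + 1) := by
        have := Nat.div_add_mod (j - 1) m
        omega
      have : a j = f m ^ ((j - 1) / m) * (f ((j - 1) % m + 1) * g ((j - 1) % m + 1)) := by
        simp only [ha, if_neg hj0]
        conv_lhs => rw [hj1]
        rw [hfpow, hg _ _ (Nat.le_add_left 1 _) (hrle (j - 1))]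
        ring
      rw [this, norm_mul, norm_pow]  -- bound
      rw [mul_comm C _]
      exact mul_le_mul_of_nonneg_left
        (hC _ (Nat.le_add_left 1 _) (hrle (j - 1))) (by positivity)
  -- the full limit
  obtain ⟨S, hS⟩ := hsa
  have hFt : Tendsto F atTop (nhds S) := by
    have h2 := hS.tendsto_sum_nat.comp (tendsto_add_atTop_nat 1)
    have : (fun n => ∑ j ∈ Finset.range (n + 1), a j) = F := by
      funext n; exact (hFa n).symm
    rwa [show ((fun n => ∑ j ∈ Finset.range n, a j) ∘ (· + 1))
      = fun n => ∑ j ∈ Finset.range (n + 1), a j from rfl, this] at h2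
  -- identify the limit via the subsequence at multiples of m
  have hmul : Tendsto (fun k : ℕ => m * k) atTop atTop := by
    apply tendsto_atTop_mono (fun k => ?_) tendsto_id
    calc (k : ℕ) = 1 * k := (one_mul k).symm
      _ ≤ m * k := Nat.mul_le_mul_right k hm
  have hsub1 : Tendsto (fun k => F (m * k)) atTop (nhds S) := hFt.comp hmul
  have hsub2 : Tendsto (fun k => F (m * k)) atTop (nhds ((1 - f m)⁻¹ * F m)) := by
    have := (hasSum_geometric_of_norm_lt_one h1).tendsto_sum_nat.mul_const (F m)
    apply this.congr
    intro k
    exact (hFk k).symm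
  have : S = (1 - f m)⁻¹ * F m := tendsto_nhds_unique hsub1 hsub2
  rw [this] at hFt
  rwa [div_eq_mul_inv, mul_comm]
end

section
/- For complex numbers z and q with |q| < 1/(1+|z|), one has the partition-indexed expansion 1/{zq;q}_∞ = ∑_{λ ∈ P} z^{ℓ(λ)} q^{|λ|} / ∏_{i∈λ} {zq;q}_{i−1}, where the sum is over all integer partitions λ (including the empty partition), ℓ(λ) is the number of parts, |λ| the sum of parts, and the product over parts i of λ counted with multiplicity. -/
open Topology Filter

/-- The composition-theoretic symbol `{zq;q}_m = 1 - ∑_{i=1}^m z q^i`. -/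
noncomputable def cbrk (z q : ℂ) (m : ℕ) : ℂ := 1 - ∑ i ∈ Finset.Icc 1 m, z * q ^ i

namespace PEaux

/-- the factor `x_a = z q^a / cbrk (a-1)` -/
noncomputable def xv (z q : ℂ) (a : ℕ+) : ℂ := z * q ^ (a : ℕ) / cbrk z q ((a : ℕ) - 1)

/-- real partial geometric sum -/
noncomputable def Sr (q : ℂ) (m : ℕ) : ℝ := ∑ i ∈ Finset.Icc 1 m, ‖q‖ ^ i

/-- real lower bound sequence -/
noncomputable def Dv (z q : ℂ) (m : ℕ) : ℝ := 1 - ‖z‖ * Sr q m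

/-- the parts-bounded-by-`N` finset -/
def Tn (N : ℕ) : Finset ℕ+ := (Finset.range N).image Nat.succPNat

variable {z q : ℂ}

lemma hq1 (h : ‖q‖ < 1 / (1 + ‖z‖)) : ‖q‖ < 1 := by
  have h1 : (0:ℝ) < 1 + ‖z‖ := by positivity
  calc ‖q‖ < 1 / (1 + ‖z‖) := h
    _ ≤ 1 := by rw [div_le_one h1]; linarith [norm_nonneg z]

lemma hzq (h : ‖q‖ < 1 / (1 + ‖z‖)) : ‖z‖ * ‖q‖ < 1 - ‖q‖ := by
  have h1 : (0:ℝ) < 1 + ‖z‖ := by positivity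
  have := (lt_div_iff₀ h1).mp h
  nlinarith

lemma Sr_nonneg (q : ℂ) (m : ℕ) : 0 ≤ Sr q m :=
  Finset.sum_nonneg fun i _ => by positivity

lemma Sr_le (h : ‖q‖ < 1 / (1 + ‖z‖)) (m : ℕ) : Sr q m ≤ ‖q‖ / (1 - ‖q‖) := by
  have ht1 : ‖q‖ < 1 := hq1 h
  have ht0 : (0:ℝ) ≤ ‖q‖ := norm_nonneg q
  have hne : ‖q‖ ≠ 1 := ne_of_lt ht1
  have h1t : (0:ℝ) < 1 - ‖q‖ := by linarith
  have : Sr q m = ‖q‖ * ∑ i ∈ Finset.range m, ‖q‖ ^ i := by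
    rw [Sr, ← Finset.Ico_add_one_right_eq_Icc, Finset.sum_Ico_eq_sum_range]
    simp only [Nat.add_sub_cancel]
    rw [Finset.mul_sum]
    exact Finset.sum_congr rfl fun i _ => by rw [pow_add, pow_one, mul_comm]
  rw [this, geom_sum_eq hne]
  rw [div_eq_mul_inv (‖q‖)]
  apply mul_le_mul_of_nonneg_left _ ht0
  rw [show (‖q‖ ^ m - 1) / (‖q‖ - 1) = (1 - ‖q‖ ^ m) / (1 - ‖q‖) by
    rw [← neg_div_neg_eq]; ring_nf]
  rw [inv_eq_one_div]
  apply div_le_div₀ (by norm_num) (by nlinarith [pow_nonneg ht0 m]) h1t le_rfl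

lemma Sr_succ (q : ℂ) (m : ℕ) : Sr q (m + 1) = Sr q m + ‖q‖ ^ (m + 1) :=
  Finset.sum_Icc_succ_top (Nat.one_le_iff_ne_zero.mpr (Nat.succ_ne_zero m)) _

lemma Dv_le_one (z q : ℂ) (m : ℕ) : Dv z q m ≤ 1 := by
  have := Sr_nonneg q m
  have : 0 ≤ ‖z‖ * Sr q m := mul_nonneg (norm_nonneg z) this
  simp only [Dv]; linarith

lemma c_le_Dv (h : ‖q‖ < 1 / (1 + ‖z‖)) (m : ℕ) :
    1 - ‖z‖ * (‖q‖ / (1 - ‖q‖)) ≤ Dv z q m := by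
  have := Sr_le h m
  have hz0 : (0:ℝ) ≤ ‖z‖ := norm_nonneg z
  have := mul_le_mul_of_nonneg_left this hz0
  simp only [Dv]; linarith

lemma c_pos (h : ‖q‖ < 1 / (1 + ‖z‖)) : 0 < 1 - ‖z‖ * (‖q‖ / (1 - ‖q‖)) := by
  have ht1 : ‖q‖ < 1 := hq1 h
  have h1t : (0:ℝ) < 1 - ‖q‖ := by linarith
  have := hzq h
  rw [mul_div_assoc'] at *
  have : ‖z‖ * ‖q‖ / (1 - ‖q‖) < 1 := (div_lt_one h1t).mpr this
  linarith

lemma Dv_pos (h : ‖q‖ < 1 / (1 + ‖z‖)) (m : ℕ) : 0 < Dv z q m :=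
  lt_of_lt_of_le (c_pos h) (c_le_Dv h m)

lemma cbrk_eq (z q : ℂ) (m : ℕ) : cbrk z q m = 1 - z * ∑ i ∈ Finset.Icc 1 m, q ^ i := by
  rw [cbrk, Finset.mul_sum]

lemma Dv_le_norm_cbrk (z q : ℂ) (m : ℕ) : Dv z q m ≤ ‖cbrk z q m‖ := by
  rw [cbrk_eq]
  have h1 : ‖z * ∑ i ∈ Finset.Icc 1 m, q ^ i‖ ≤ ‖z‖ * Sr q m := by
    rw [norm_mul]
    refine mul_le_mul_of_nonneg_left ?_ (norm_nonneg z)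
    refine le_trans (norm_sum_le _ _) ?_
    refine le_of_eq (Finset.sum_congr rfl fun i _ => norm_pow q i)
  calc Dv z q m = 1 - ‖z‖ * Sr q m := rfl
    _ ≤ 1 - ‖z * ∑ i ∈ Finset.Icc 1 m, q ^ i‖ := by linarith
    _ ≤ ‖(1:ℂ)‖ - ‖z * ∑ i ∈ Finset.Icc 1 m, q ^ i‖ := by simp
    _ ≤ ‖1 - z * ∑ i ∈ Finset.Icc 1 m, q ^ i‖ := norm_sub_norm_le _ _

lemma cbrk_ne_zero (h : ‖q‖ < 1 / (1 + ‖z‖)) (m : ℕ) : cbrk z q m ≠ 0 := by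
  intro hc
  have := Dv_le_norm_cbrk z q m
  rw [hc, norm_zero] at this
  exact absurd this (not_le.mpr (Dv_pos h m))

lemma pnat_pred_succ (a : ℕ+) : ((a : ℕ) - 1) + 1 = (a : ℕ) :=
  Nat.succ_pred_eq_of_pos a.pos

lemma Dv_pnat (z q : ℂ) (a : ℕ+) :
    Dv z q (a : ℕ) = Dv z q ((a : ℕ) - 1) - ‖z‖ * ‖q‖ ^ (a : ℕ) := by
  conv_lhs => rw [← pnat_pred_succ a]
  rw [Dv, Dv, Sr_succ, pnat_pred_succ a]
  ring

lemma norm_xv_le (h : ‖q‖ < 1 / (1 + ‖z‖)) (a : ℕ+) :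
    ‖xv z q a‖ ≤ ‖z‖ * ‖q‖ ^ (a : ℕ) / Dv z q ((a : ℕ) - 1) := by
  rw [xv, norm_div, norm_mul, norm_pow]
  exact div_le_div_of_nonneg_left (by positivity) (Dv_pos h _) (Dv_le_norm_cbrk z q _)

lemma one_sub_norm_xv_ge (h : ‖q‖ < 1 / (1 + ‖z‖)) (a : ℕ+) :
    Dv z q (a : ℕ) / Dv z q ((a : ℕ) - 1) ≤ 1 - ‖xv z q a‖ := by
  have hD := Dv_pos h ((a : ℕ) - 1)
  have h1 := norm_xv_le h a
  have : Dv z q (a : ℕ) / Dv z q ((a : ℕ) - 1)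
      = 1 - ‖z‖ * ‖q‖ ^ (a : ℕ) / Dv z q ((a : ℕ) - 1) := by
    rw [Dv_pnat, sub_div, div_self (ne_of_gt hD)]
  rw [this]
  linarith

lemma norm_xv_lt_one (h : ‖q‖ < 1 / (1 + ‖z‖)) (a : ℕ+) : ‖xv z q a‖ < 1 := by
  have h1 := one_sub_norm_xv_ge h a
  have h2 : 0 < Dv z q (a : ℕ) / Dv z q ((a : ℕ) - 1) :=
    div_pos (Dv_pos h _) (Dv_pos h _)
  linarith

lemma cbrk_zero' (z q : ℂ) : cbrk z q 0 = 1 := by simp [cbrk]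

lemma cbrk_pnat (z q : ℂ) (a : ℕ+) :
    cbrk z q (a : ℕ) = cbrk z q ((a : ℕ) - 1) - z * q ^ (a : ℕ) := by
  conv_lhs => rw [← pnat_pred_succ a]
  rw [cbrk, cbrk, Finset.sum_Icc_succ_top (Nat.one_le_iff_ne_zero.mpr (Nat.succ_ne_zero _)),
    pnat_pred_succ a]
  ring

lemma one_sub_xv (h : ‖q‖ < 1 / (1 + ‖z‖)) (a : ℕ+) :
    1 - xv z q a = cbrk z q (a : ℕ) / cbrk z q ((a : ℕ) - 1) := by
  rw [cbrk_pnat, sub_div, div_self (cbrk_ne_zero h _), xv]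

lemma prod_one_sub_xv (h : ‖q‖ < 1 / (1 + ‖z‖)) (N : ℕ) :
    ∏ j ∈ Finset.range N, (1 - xv z q (Nat.succPNat j)) = cbrk z q N := by
  induction N with
  | zero => simp [cbrk_zero']
  | succ n ih =>
      rw [Finset.prod_range_succ, ih, one_sub_xv h]
      have : ((Nat.succPNat n : ℕ+) : ℕ) = n + 1 := rfl
      rw [this]
      simp only [Nat.add_sub_cancel]
      rw [mul_div_assoc']
      rw [mul_comm, mul_div_assoc, div_self (cbrk_ne_zero h n), mul_one]

lemma prod_one_sub_norm_ge (h : ‖q‖ < 1 / (1 + ‖z‖)) (N : ℕ) :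
    Dv z q N ≤ ∏ j ∈ Finset.range N, (1 - ‖xv z q (Nat.succPNat j)‖) := by
  induction N with
  | zero => simp [Dv, Sr]
  | succ n ih =>
      rw [Finset.prod_range_succ]
      have hco : ((Nat.succPNat n : ℕ+) : ℕ) = n + 1 := rfl
      have h1 := one_sub_norm_xv_ge h (Nat.succPNat n)
      rw [hco] at h1
      simp only [Nat.add_sub_cancel] at h1
      have hDn := Dv_pos h n
      have hDn1 := Dv_pos h (n + 1)
      have hprod : 0 ≤ ∏ j ∈ Finset.range n, (1 - ‖xv z q (Nat.succPNat j)‖) :=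
        le_trans (le_of_lt hDn) ih
      calc Dv z q (n + 1) = Dv z q n * (Dv z q (n+1) / Dv z q n) := by
            rw [mul_div_assoc']; rw [mul_comm, mul_div_assoc, div_self (ne_of_gt hDn), mul_one]
        _ ≤ (∏ j ∈ Finset.range n, (1 - ‖xv z q (Nat.succPNat j)‖)) *
              (1 - ‖xv z q (Nat.succPNat n)‖) :=
            mul_le_mul ih h1 (le_of_lt (div_pos hDn1 hDn)) hprod

lemma mem_Tn {a : ℕ+} {N : ℕ} : a ∈ Tn N ↔ (a : ℕ) ≤ N := by
  simp only [Tn, Finset.mem_image, Finset.mem_range]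
  constructor
  · rintro ⟨j, hj, rfl⟩
    rw [Nat.succPNat_coe]
    omega
  · intro ha
    have hpos := a.pos
    refine ⟨(a : ℕ) - 1, by omega, ?_⟩
    apply PNat.coe_injective
    rw [Nat.succPNat_coe]
    omega

lemma prod_Tn {M : Type*} [CommMonoid M] (f : ℕ+ → M) (N : ℕ) :
    ∏ a ∈ Tn N, f a = ∏ j ∈ Finset.range N, f (Nat.succPNat j) :=
  Finset.prod_image fun _ _ _ _ hh => Nat.succPNat_injective hh

lemma prod_inv_norm_le (h : ‖q‖ < 1 / (1 + ‖z‖)) (s : Finset ℕ+) :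
    ∏ a ∈ s, (1 - ‖xv z q a‖)⁻¹ ≤ (1 - ‖z‖ * (‖q‖ / (1 - ‖q‖)))⁻¹ := by
  set c := 1 - ‖z‖ * (‖q‖ / (1 - ‖q‖)) with hc
  have hcpos := c_pos h
  have hfac : ∀ a : ℕ+, 0 < 1 - ‖xv z q a‖ := fun a => by
    have := norm_xv_lt_one h a; linarith
  have hfac1 : ∀ a : ℕ+, 1 ≤ (1 - ‖xv z q a‖)⁻¹ := fun a =>
    (one_le_inv₀ (hfac a)).mpr (by have := norm_nonneg (xv z q a); linarith)
  -- enlarge s to Tn N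
  set N := s.sup fun a => (a : ℕ) with hN
  have hsub : s ⊆ Tn N := fun a ha => mem_Tn.mpr (Finset.le_sup (f := fun a : ℕ+ => (a : ℕ)) ha)
  have h1 : ∏ a ∈ s, (1 - ‖xv z q a‖)⁻¹ ≤ ∏ a ∈ Tn N, (1 - ‖xv z q a‖)⁻¹ := by
    rw [← Finset.prod_sdiff hsub]
    have hone : (1:ℝ) ≤ ∏ a ∈ Tn N \ s, (1 - ‖xv z q a‖)⁻¹ :=
      calc (1:ℝ) = ∏ _a ∈ Tn N \ s, 1 := Finset.prod_const_one.symm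
        _ ≤ _ := Finset.prod_le_prod (fun i _ => zero_le_one) (fun i _ => hfac1 i)
    have hs0 : 0 ≤ ∏ a ∈ s, (1 - ‖xv z q a‖)⁻¹ :=
      Finset.prod_nonneg fun i _ => inv_nonneg.mpr (le_of_lt (hfac i))
    exact le_mul_of_one_le_left hs0 hone
  have h2 : ∏ a ∈ Tn N, (1 - ‖xv z q a‖)⁻¹
      = (∏ j ∈ Finset.range N, (1 - ‖xv z q (Nat.succPNat j)‖))⁻¹ := by
    rw [prod_Tn, Finset.prod_inv_distrib]
  have h3 : c ≤ ∏ j ∈ Finset.range N, (1 - ‖xv z q (Nat.succPNat j)‖) :=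
    le_trans (c_le_Dv h N) (prod_one_sub_norm_ge h N)
  calc ∏ a ∈ s, (1 - ‖xv z q a‖)⁻¹ ≤ _ := h1
    _ = _ := h2
    _ ≤ c⁻¹ := inv_anti₀ hcpos h3

lemma prod_Tn_one_sub_inv (h : ‖q‖ < 1 / (1 + ‖z‖)) (N : ℕ) :
    ∏ a ∈ Tn N, (1 - xv z q a)⁻¹ = (cbrk z q N)⁻¹ := by
  rw [prod_Tn, Finset.prod_inv_distrib, prod_one_sub_xv h]

/-- Extend `f` supported in `s` by a multiplicity `n` at a fresh point `a`. -/
noncomputable def extEquiv (a : ℕ+) (s : Finset ℕ+) (ha : a ∉ s) :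
    ℕ × {f : ℕ+ →₀ ℕ // f.support ⊆ s} ≃ {f : ℕ+ →₀ ℕ // f.support ⊆ insert a s} where
  toFun p := ⟨p.2.1 + Finsupp.single a p.1, by
    intro b hb
    rcases Finset.mem_union.mp (Finsupp.support_add hb) with hb | hb
    · exact Finset.mem_insert_of_mem (p.2.2 hb)
    · have hba : b = a := by
        have := Finsupp.support_single_subset hb
        simpa using this
      simp [hba]⟩
  invFun g := (g.1 a, ⟨Finsupp.erase a g.1, by
    intro b hb
    rw [Finsupp.support_erase] at hb
    have h1 := Finset.mem_of_mem_erase hb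
    have h2 := Finset.ne_of_mem_erase hb
    rcases Finset.mem_insert.mp (g.2 h1) with hh | hh
    · exact absurd hh h2
    · exact hh⟩)
  left_inv p := by
    obtain ⟨n, f, hf⟩ := p
    have hfa : f a = 0 := Finsupp.notMem_support_iff.mp fun hc => ha (hf hc)
    refine Prod.ext ?_ (Subtype.ext ?_)
    · simp [hfa]
    · ext b
      by_cases hb : b = a
      · subst hb
        simp [Finsupp.erase_same, hfa]
      · simp [Finsupp.erase_ne hb, Finsupp.single_eq_of_ne (Ne.symm hb)]
  right_inv g := Subtype.ext (Finsupp.erase_add_single a g.1)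

lemma prod_pow_add_single {𝕜 : Type*} [CommMonoid 𝕜] (x : ℕ+ → 𝕜) (a : ℕ+) (n : ℕ)
    (f : ℕ+ →₀ ℕ) :
    ((f + Finsupp.single a n).prod fun b m => x b ^ m)
      = (f.prod fun b m => x b ^ m) * x a ^ n := by
  rw [Finsupp.prod_add_index (fun b _ => pow_zero (x b)) (fun b _ m1 m2 => pow_add (x b) m1 m2),
    Finsupp.prod_single_index (h := fun b m => x b ^ m) (pow_zero (x a))]

lemma hasSum_restricted {𝕜 : Type*} [NormedField 𝕜] [CompleteSpace 𝕜] (x : ℕ+ → 𝕜)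
    (hlt : ∀ a, ‖x a‖ < 1)
    (hsm : ∀ s : Finset ℕ+,
      Summable (fun f : {f : ℕ+ →₀ ℕ // f.support ⊆ s} =>
        ‖(f : ℕ+ →₀ ℕ).prod fun a n => x a ^ n‖))
    (s : Finset ℕ+) :
    HasSum (fun f : {f : ℕ+ →₀ ℕ // f.support ⊆ s} =>
        (f : ℕ+ →₀ ℕ).prod fun a n => x a ^ n)
      (∏ a ∈ s, (1 - x a)⁻¹) := by
  induction s using Finset.induction_on with
  | empty =>
      have huniq : ∀ f : {f : ℕ+ →₀ ℕ // f.support ⊆ (∅ : Finset ℕ+)},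
          f = ⟨0, by simp⟩ := by
        rintro ⟨f, hf⟩
        refine Subtype.ext ?_
        exact Finsupp.support_eq_empty.mp (Finset.subset_empty.mp hf)
      have := hasSum_single (f := fun f : {f : ℕ+ →₀ ℕ // f.support ⊆ (∅ : Finset ℕ+)} =>
          (f : ℕ+ →₀ ℕ).prod fun a n => x a ^ n)
        (⟨0, by simp⟩ : {f : ℕ+ →₀ ℕ // f.support ⊆ (∅ : Finset ℕ+)})
        (fun b hb => absurd (huniq b) hb)
      simpa [Finsupp.prod_zero_index] using this
  | @insert a s ha ih =>
      have hgeo : HasSum (fun n : ℕ => x a ^ n) (1 - x a)⁻¹ :=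
        hasSum_geometric_of_norm_lt_one (by simpa using hlt a)
      have hnorm1 : Summable fun n : ℕ => ‖x a ^ n‖ := by
        simpa [norm_pow] using summable_geometric_of_lt_one (norm_nonneg (x a)) (hlt a)
      have hmulsum : Summable (fun p : ℕ × {f : ℕ+ →₀ ℕ // f.support ⊆ s} =>
          (x a ^ p.1) * ((p.2 : ℕ+ →₀ ℕ).prod fun b n => x b ^ n)) :=
        summable_mul_of_summable_norm (f := fun n : ℕ => x a ^ n)
          (g := fun f : {f : ℕ+ →₀ ℕ // f.support ⊆ s} =>
            (f : ℕ+ →₀ ℕ).prod fun b n => x b ^ n) hnorm1 (hsm s)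
      have hs2 := hgeo.mul ih hmulsum
      rw [Finset.prod_insert ha]
      refine (Equiv.hasSum_iff (extEquiv a s ha)).mp ?_
      have : (fun f : {f : ℕ+ →₀ ℕ // f.support ⊆ insert a s} =>
            (f : ℕ+ →₀ ℕ).prod fun b n => x b ^ n) ∘ (extEquiv a s ha)
          = fun p : ℕ × {f : ℕ+ →₀ ℕ // f.support ⊆ s} =>
            (x a ^ p.1) * ((p.2 : ℕ+ →₀ ℕ).prod fun b n => x b ^ n) := by
        funext p
        simp only [Function.comp_apply, extEquiv, Equiv.coe_fn_mk]
        rw [prod_pow_add_single]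
        ring
      rw [this]
      exact hs2

lemma prod_pow_nonneg (y : ℕ+ → ℝ) (h0 : ∀ a, 0 ≤ y a) (f : ℕ+ →₀ ℕ) :
    0 ≤ f.prod fun a n => y a ^ n :=
  Finset.prod_nonneg fun a _ => pow_nonneg (h0 a) _

lemma norm_finsupp_prod_pow {𝕜 : Type*} [NormedField 𝕜] (x : ℕ+ → 𝕜) (f : ℕ+ →₀ ℕ) :
    ‖f.prod fun a n => x a ^ n‖ = f.prod fun a n => ‖x a‖ ^ n := by
  rw [Finsupp.prod, Finsupp.prod, norm_prod]
  exact Finset.prod_congr rfl fun a _ => norm_pow _ _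

lemma hasSum_restricted_pos (y : ℕ+ → ℝ) (h0 : ∀ a, 0 ≤ y a) (h1 : ∀ a, y a < 1)
    (s : Finset ℕ+) :
    HasSum (fun f : {f : ℕ+ →₀ ℕ // f.support ⊆ s} =>
        (f : ℕ+ →₀ ℕ).prod fun a n => y a ^ n)
      (∏ a ∈ s, (1 - y a)⁻¹) := by
  induction s using Finset.induction_on with
  | empty =>
      have huniq : ∀ f : {f : ℕ+ →₀ ℕ // f.support ⊆ (∅ : Finset ℕ+)},
          f = ⟨0, by simp⟩ := by
        rintro ⟨f, hf⟩
        exact Subtype.ext (Finsupp.support_eq_empty.mp (Finset.subset_empty.mp hf))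
      have := hasSum_single (f := fun f : {f : ℕ+ →₀ ℕ // f.support ⊆ (∅ : Finset ℕ+)} =>
          (f : ℕ+ →₀ ℕ).prod fun a n => y a ^ n)
        (⟨0, by simp⟩ : {f : ℕ+ →₀ ℕ // f.support ⊆ (∅ : Finset ℕ+)})
        (fun b hb => absurd (huniq b) hb)
      simpa [Finsupp.prod_zero_index] using this
  | @insert a s ha ih =>
      have hay : ‖y a‖ < 1 := by
        rw [Real.norm_eq_abs, abs_of_nonneg (h0 a)]; exact h1 a
      have hgeo : HasSum (fun n : ℕ => y a ^ n) (1 - y a)⁻¹ :=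
        hasSum_geometric_of_norm_lt_one hay
      have hnorm1 : Summable fun n : ℕ => ‖y a ^ n‖ := by
        simpa [norm_pow] using summable_geometric_of_lt_one (norm_nonneg (y a)) hay
      have hsms : Summable (fun f : {f : ℕ+ →₀ ℕ // f.support ⊆ s} =>
          ‖(f : ℕ+ →₀ ℕ).prod fun b n => y b ^ n‖) :=
        ih.summable.congr fun f => by
          rw [Real.norm_eq_abs, abs_of_nonneg (prod_pow_nonneg y h0 _)]
      have hmulsum : Summable (fun p : ℕ × {f : ℕ+ →₀ ℕ // f.support ⊆ s} =>
          (y a ^ p.1) * ((p.2 : ℕ+ →₀ ℕ).prod fun b n => y b ^ n)) :=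
        summable_mul_of_summable_norm (f := fun n : ℕ => y a ^ n)
          (g := fun f : {f : ℕ+ →₀ ℕ // f.support ⊆ s} =>
            (f : ℕ+ →₀ ℕ).prod fun b n => y b ^ n) hnorm1 hsms
      have hs2 := hgeo.mul ih hmulsum
      rw [Finset.prod_insert ha]
      refine (Equiv.hasSum_iff (extEquiv a s ha)).mp ?_
      have : (fun f : {f : ℕ+ →₀ ℕ // f.support ⊆ insert a s} =>
            (f : ℕ+ →₀ ℕ).prod fun b n => y b ^ n) ∘ (extEquiv a s ha)
          = fun p : ℕ × {f : ℕ+ →₀ ℕ // f.support ⊆ s} =>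
            (y a ^ p.1) * ((p.2 : ℕ+ →₀ ℕ).prod fun b n => y b ^ n) := by
        funext p
        simp only [Function.comp_apply, extEquiv, Equiv.coe_fn_mk]
        rw [prod_pow_add_single]
        ring
      rw [this]
      exact hs2

lemma hasSum_restricted_complex (x : ℕ+ → ℂ) (hlt : ∀ a, ‖x a‖ < 1) (s : Finset ℕ+) :
    HasSum (fun f : {f : ℕ+ →₀ ℕ // f.support ⊆ s} =>
        (f : ℕ+ →₀ ℕ).prod fun a n => x a ^ n)
      (∏ a ∈ s, (1 - x a)⁻¹) := by
  refine hasSum_restricted x hlt (fun t => ?_) s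
  have := (hasSum_restricted_pos (fun a => ‖x a‖) (fun a => norm_nonneg _) hlt t).summable
  refine this.congr fun f => ?_
  exact (norm_finsupp_prod_pow x f.1).symm

lemma summable_FR (h : ‖q‖ < 1 / (1 + ‖z‖)) :
    Summable (fun f : ℕ+ →₀ ℕ => f.prod fun a n => ‖xv z q a‖ ^ n) := by
  apply summable_of_sum_le (c := (1 - ‖z‖ * (‖q‖ / (1 - ‖q‖)))⁻¹)
    (fun f => prod_pow_nonneg _ (fun a => norm_nonneg _) f)
  intro u
  set s : Finset ℕ+ := u.sup Finsupp.support with hs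
  have hmem : ∀ f ∈ u, f.support ⊆ s := fun f hf => Finset.le_sup (f := Finsupp.support) hf
  set emb : {f : ℕ+ →₀ ℕ // f ∈ u} ↪ {f : ℕ+ →₀ ℕ // f.support ⊆ s} :=
    ⟨fun f => ⟨f.1, hmem f.1 f.2⟩, fun a b hab => by have hv := congrArg Subtype.val hab; exact Subtype.ext hv⟩
  have heq : ∑ f ∈ u, (f.prod fun a n => ‖xv z q a‖ ^ n)
      = ∑ g ∈ u.attach.map emb, ((g : ℕ+ →₀ ℕ).prod fun a n => ‖xv z q a‖ ^ n) := by
    rw [Finset.sum_map]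
    exact (Finset.sum_attach u _).symm
  rw [heq]
  calc _ ≤ ∏ a ∈ s, (1 - ‖xv z q a‖)⁻¹ :=
        sum_le_hasSum _ (fun i _ => prod_pow_nonneg _ (fun a => norm_nonneg _) _)
          (hasSum_restricted_pos (fun a => ‖xv z q a‖) (fun a => norm_nonneg _)
            (norm_xv_lt_one h) s)
    _ ≤ _ := prod_inv_norm_le h s

/-- the multiset term equals the product of the `xv`'s -/
lemma multiset_term_eq (h : ‖q‖ < 1 / (1 + ‖z‖)) (μ : Multiset ℕ+) :
    z ^ Multiset.card μ * q ^ (Multiset.map (fun i : ℕ+ => (i : ℕ)) μ).sum /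
        (Multiset.map (fun i : ℕ+ => cbrk z q ((i : ℕ) - 1)) μ).prod
      = (Multiset.toFinsupp μ).prod fun a n => xv z q a ^ n := by
  have step1 : z ^ Multiset.card μ * q ^ (Multiset.map (fun i : ℕ+ => (i : ℕ)) μ).sum /
        (Multiset.map (fun i : ℕ+ => cbrk z q ((i : ℕ) - 1)) μ).prod
      = (μ.map (xv z q)).prod := by
    induction μ using Multiset.induction_on with
    | empty => simp
    | cons i μ ih =>
        have hP : (Multiset.map (fun i : ℕ+ => cbrk z q ((i : ℕ) - 1)) μ).prod ≠ 0 := by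
          apply Multiset.prod_ne_zero
          intro hzero
          obtain ⟨j, _, hj⟩ := Multiset.mem_map.mp hzero
          exact cbrk_ne_zero h _ hj
        rw [Multiset.card_cons, Multiset.map_cons, Multiset.map_cons, Multiset.map_cons,
          Multiset.sum_cons, Multiset.prod_cons, Multiset.prod_cons, ← ih, xv]
        have hc : cbrk z q ((i : ℕ) - 1) ≠ 0 := cbrk_ne_zero h _
        field_simp
        ring
  rw [step1]
  clear step1
  induction μ using Multiset.induction_on with
  | empty => simp
  | cons a μ ih =>
      have hcons : a ::ₘ μ = μ + {a} := by
        rw [add_comm, Multiset.singleton_add]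
      rw [Multiset.map_cons, Multiset.prod_cons, ih, hcons, map_add,
        Multiset.toFinsupp_singleton, prod_pow_add_single, pow_one, mul_comm]

lemma one_sub_q_ne (h : ‖q‖ < 1 / (1 + ‖z‖)) : (1 : ℂ) - q ≠ 0 := by
  intro hc
  have hq : q = 1 := by linear_combination -hc
  subst hq
  have := hq1 h
  simp at this

lemma denom_ne (h : ‖q‖ < 1 / (1 + ‖z‖)) : (1 : ℂ) - q - z * q ≠ 0 := by
  intro hc
  have hq : q + z * q = 1 := by linear_combination -hc
  have hn : ‖q + z * q‖ < 1 := by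
    calc ‖q + z * q‖ ≤ ‖q‖ + ‖z * q‖ := norm_add_le _ _
      _ = ‖q‖ + ‖z‖ * ‖q‖ := by rw [norm_mul]
      _ < 1 := by have := hzq h; linarith
  rw [hq] at hn
  simp at hn

lemma tendsto_cbrk (h : ‖q‖ < 1 / (1 + ‖z‖)) :
    Filter.Tendsto (fun N => cbrk z q N) Filter.atTop (𝓝 ((1 - q - z * q) / (1 - q))) := by
  have hgeo : HasSum (fun n : ℕ => q ^ n) (1 - q)⁻¹ :=
    hasSum_geometric_of_norm_lt_one (hq1 h)
  have h1 : Filter.Tendsto (fun N : ℕ => ∑ i ∈ Finset.range (N + 1), q ^ i)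
      Filter.atTop (𝓝 (1 - q)⁻¹) :=
    hgeo.tendsto_sum_nat.comp (Filter.tendsto_add_atTop_nat 1)
  have h2 : ∀ N : ℕ, cbrk z q N = 1 - z * ((∑ i ∈ Finset.range (N + 1), q ^ i) - 1) := by
    intro N
    have : ∑ i ∈ Finset.range (N + 1), q ^ i = 1 + ∑ i ∈ Finset.Icc 1 N, q ^ i := by
      rw [Finset.range_eq_Ico, Finset.sum_eq_sum_Ico_succ_bot (Nat.succ_pos N),
        Nat.succ_eq_add_one, Finset.Ico_add_one_right_eq_Icc]
      simp
    rw [this, cbrk, ← Finset.mul_sum]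
    ring
  have h3 : Filter.Tendsto (fun N : ℕ => 1 - z * ((∑ i ∈ Finset.range (N + 1), q ^ i) - 1))
      Filter.atTop (𝓝 (1 - z * ((1 - q)⁻¹ - 1))) :=
    (((h1.sub_const 1).const_mul z).const_sub 1)
  have h4 : 1 - z * ((1 - q)⁻¹ - 1) = (1 - q - z * q) / (1 - q) := by
    have hne := one_sub_q_ne h
    field_simp
    ring
  rw [← h4]
  exact h3.congr fun N => (h2 N).symm

lemma hasSum_main (h : ‖q‖ < 1 / (1 + ‖z‖)) :
    HasSum (fun f : ℕ+ →₀ ℕ => f.prod fun a n => xv z q a ^ n)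
      ((1 - q) / (1 - q - z * q)) := by
  set F : (ℕ+ →₀ ℕ) → ℂ := fun f => f.prod fun a n => xv z q a ^ n with hF
  have hnormF : Summable fun f => ‖F f‖ :=
    (summable_FR h).congr fun f => (norm_finsupp_prod_pow (xv z q) f).symm
  have hFs : Summable F := hnormF.of_norm
  set L : ℂ := ∑' f, F f with hL
  have hLsum : HasSum F L := hFs.hasSum
  suffices hLeq : L = (1 - q) / (1 - q - z * q) by rwa [hLeq] at hLsum
  set A : ℕ → Set (ℕ+ →₀ ℕ) := fun N => {f | f.support ⊆ Tn N} with hA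
  have hresA : ∀ N : ℕ, ∑' (f : ↑(A N)), F f.1 = (cbrk z q N)⁻¹ := by
    intro N
    have h1 := hasSum_restricted_complex (xv z q) (norm_xv_lt_one h) (Tn N)
    rw [prod_Tn_one_sub_inv h N] at h1
    exact h1.tsum_eq
  have hsplit : ∀ N, ∑' (f : ↑(A N)), F f.1 + ∑' (f : ↑(A N)ᶜ), F f.1 = L :=
    fun N => hFs.tsum_subtype_add_tsum_subtype_compl (A N)
  set tail : ℕ → ℂ := fun N => ∑' (f : ↑(A N)ᶜ), F f.1 with htaildef
  have hkey : ∀ N, L = (cbrk z q N)⁻¹ + tail N := fun N => by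
    rw [← hsplit N, hresA N]
  set rr : ℕ → ℝ := fun N => ∑' (f : ↑(A N)ᶜ), ‖F f.1‖ with hrrdef
  have hsubsum : ∀ s : Set (ℕ+ →₀ ℕ), Summable (fun f : ↑s => ‖F f.1‖) :=
    fun s => hnormF.subtype s
  have htail : ∀ N, ‖tail N‖ ≤ rr N := fun N => norm_tsum_le_tsum_norm (hsubsum _)
  -- the tail of norms tends to zero
  have hrr0 : Tendsto rr atTop (𝓝 0) := by
    set Tot : ℝ := ∑' f, ‖F f‖ with hTotdef
    have hTot : HasSum (fun f => ‖F f‖) Tot := hnormF.hasSum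
    rw [Metric.tendsto_atTop]
    intro ε hε
    obtain ⟨u, hu⟩ := (hTot.eventually (Metric.ball_mem_nhds Tot (half_pos hε))).exists
    rw [Real.dist_eq] at hu
    refine ⟨u.sup (fun f => f.support.sup fun a => (a : ℕ)), fun N hN => ?_⟩
    have husub : ∀ f ∈ u, f ∈ A N := by
      intro f hf a ha
      apply mem_Tn.mpr
      calc (a : ℕ) ≤ f.support.sup (fun a => (a : ℕ)) :=
            Finset.le_sup (f := fun a : ℕ+ => (a : ℕ)) ha
        _ ≤ u.sup (fun f => f.support.sup fun a => (a : ℕ)) :=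
            Finset.le_sup (f := fun f : ℕ+ →₀ ℕ => f.support.sup fun a => (a : ℕ)) hf
        _ ≤ N := hN
    set emb : {f : ℕ+ →₀ ℕ // f ∈ u} ↪ ↑(A N) :=
      ⟨fun f => ⟨f.1, husub f.1 f.2⟩, fun a b hab => by have hv := congrArg Subtype.val hab; exact Subtype.ext hv⟩
    have hle : ∑ f ∈ u, ‖F f‖ ≤ ∑' (f : ↑(A N)), ‖F f.1‖ := by
      have h2 := sum_le_hasSum (u.attach.map emb) (fun i _ => norm_nonneg _)
        (hsubsum (A N)).hasSum
      rw [Finset.sum_map] at h2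
      calc ∑ f ∈ u, ‖F f‖ = ∑ f ∈ u.attach, ‖F (emb f).1‖ :=
            (Finset.sum_attach u fun f => ‖F f‖).symm
        _ ≤ _ := h2
    have hsplitN : ∑' (f : ↑(A N)), ‖F f.1‖ + rr N = Tot :=
      hnormF.tsum_subtype_add_tsum_subtype_compl (A N)
    have hnn : 0 ≤ rr N := tsum_nonneg fun f => norm_nonneg _
    rw [Real.dist_eq, sub_zero, abs_of_nonneg hnn]
    have : rr N ≤ Tot - ∑ f ∈ u, ‖F f‖ := by linarith
    have habs : Tot - ∑ f ∈ u, ‖F f‖ ≤ ε / 2 := by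
      have := abs_sub_abs_le_abs_sub (∑ f ∈ u, ‖F f‖) Tot
      have h3 := neg_abs_le (∑ f ∈ u, ‖F f‖ - Tot)
      linarith [hu, abs_nonneg (∑ f ∈ u, ‖F f‖ - Tot)]
    linarith
  -- conclude
  have hwne : (1 - q - z * q) / (1 - q) ≠ 0 := div_ne_zero (denom_ne h) (one_sub_q_ne h)
  have hlim : Tendsto (fun N => (cbrk z q N)⁻¹ + tail N) atTop
      (𝓝 (((1 - q - z * q) / (1 - q))⁻¹ + 0)) :=
    (((tendsto_cbrk h).inv₀ hwne)).add (squeeze_zero_norm htail hrr0)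
  have hconst : (fun N => (cbrk z q N)⁻¹ + tail N) = fun _ : ℕ => L :=
    funext fun N => (hkey N).symm
  rw [hconst] at hlim
  have := tendsto_nhds_unique hlim tendsto_const_nhds
  rw [add_zero, inv_div] at this
  exact this.symm


end PEaux


/-- For `|q| < 1/(1+|z|)`:
`1/{zq;q}_∞ = ∑_{λ ∈ 𝒫} z^{ℓ(λ)} q^{|λ|} / ∏_{i∈λ} {zq;q}_{i-1}`, the sum over all integer
partitions (multisets of positive integers, including the empty partition); here
`{zq;q}_∞ = (1-q-zq)/(1-q)`, so the sum equals `(1-q)/(1-q-zq)`. -/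
theorem partition_expansion_inv (z q : ℂ) (h : ‖q‖ < 1 / (1 + ‖z‖)) :
    HasSum
      (fun μ : Multiset ℕ+ =>
        z ^ Multiset.card μ * q ^ (μ.map fun i => (i : ℕ)).sum /
          (μ.map fun i => cbrk z q ((i : ℕ) - 1)).prod)
      ((1 - q) / (1 - q - z * q)) := by
  have hfun : (fun μ : Multiset ℕ+ =>
        z ^ Multiset.card μ * q ^ (μ.map fun i => (i : ℕ)).sum /
          (μ.map fun i => cbrk z q ((i : ℕ) - 1)).prod)
      = fun μ : Multiset ℕ+ =>
          (Multiset.toFinsupp μ).prod fun a n => PEaux.xv z q a ^ n := by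
    funext μ
    have e1 : (μ.map fun i => (i : ℕ)) = Multiset.map (fun a : ℕ+ => (a : ℕ)) μ := by
      simp [Multiset.pure_def, Multiset.bind_def, Multiset.bind_singleton, Multiset.map_id']
    have e2 : (μ.map fun i => cbrk z q ((i : ℕ) - 1))
        = Multiset.map (fun a : ℕ+ => cbrk z q ((a : ℕ) - 1)) μ := by
      simp [Multiset.pure_def, Multiset.bind_def, Multiset.bind_singleton, Multiset.map_map]
    rw [e1, e2]
    exact PEaux.multiset_term_eq h μ
  rw [hfun]
  have hcomp : (fun μ : Multiset ℕ+ =>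
        (Multiset.toFinsupp μ).prod fun a n => PEaux.xv z q a ^ n)
      = (fun f : ℕ+ →₀ ℕ => f.prod fun a n => PEaux.xv z q a ^ n) ∘
          ⇑(Multiset.toFinsupp (α := ℕ+)).toEquiv := rfl
  rw [hcomp]
  exact (Equiv.hasSum_iff (Multiset.toFinsupp (α := ℕ+)).toEquiv).mpr (PEaux.hasSum_main h)
end

section
/- For complex numbers z and q with |q| < 1/(1+|z|), one has {zq;q}_∞ = ∑_{λ ∈ P*} (−z)^{ℓ(λ)} q^{|λ|} / ∏_{i∈λ} {zq;q}_{i−1}, where the sum is over all partitions λ into distinct parts (including the empty partition). -/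
open Finset Filter Topology

lemma cbrk_zero (z q : ℂ) : cbrk z q 0 = 1 := by simp [cbrk]

lemma cbrk_succ (z q : ℂ) (m : ℕ) : cbrk z q (m + 1) = cbrk z q m - z * q ^ (m + 1) := by
  rw [cbrk, cbrk, Finset.sum_Icc_succ_top (Nat.le_add_left 1 m)]
  ring

/-- For `|q| < 1/(1+|z|)`:
`{zq;q}_∞ = ∑_{λ ∈ 𝒫*} (−z)^{ℓ(λ)} q^{|λ|} / ∏_{i∈λ} {zq;q}_{i-1}`, the sum over all
partitions into distinct parts (including the empty partition), where
`{zq;q}_∞ = (1-q-zq)/(1-q)`. -/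
theorem partition_expansion_distinct (z q : ℂ) (h : ‖q‖ < 1 / (1 + ‖z‖)) :
    HasSum
      (fun μ : {s : Multiset ℕ+ // s.Nodup} =>
        (-z) ^ Multiset.card (μ : Multiset ℕ+) *
          q ^ ((μ : Multiset ℕ+).map fun i => (i : ℕ)).sum /
          ((μ : Multiset ℕ+).map fun i => cbrk z q ((i : ℕ) - 1)).prod)
      ((1 - q - z * q) / (1 - q)) := by
  have hz1 : (0:ℝ) < 1 + ‖z‖ := by positivity
  have hr1 : ‖q‖ < 1 := by
    refine lt_of_lt_of_le h ?_
    rw [div_le_one hz1]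
    linarith [norm_nonneg z]
  have hrz : ‖z‖ * ‖q‖ < 1 - ‖q‖ := by
    have := (lt_div_iff₀ hz1).mp h
    nlinarith [norm_nonneg z, norm_nonneg q]
  have hden : (0:ℝ) < 1 - ‖q‖ := by
    have := mul_nonneg (norm_nonneg z) (norm_nonneg q)
    linarith
  set c : ℝ := 1 - ‖z‖ * ‖q‖ * (1 - ‖q‖)⁻¹ with hc_def
  have hc : 0 < c := by
    have h1 : ‖z‖ * ‖q‖ * (1 - ‖q‖)⁻¹ < 1 := by
      rw [← div_eq_mul_inv, div_lt_one hden]; exact hrz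
    rw [hc_def]
    linarith
  -- geometric bounds
  have hgeo : ∀ s : Finset ℕ, ∑ i ∈ s, ‖q‖ ^ i ≤ (1 - ‖q‖)⁻¹ := by
    intro s
    have := Summable.sum_le_tsum s (fun i _ => pow_nonneg (norm_nonneg q) i)
      (summable_geometric_of_lt_one (norm_nonneg q) hr1)
    rwa [tsum_geometric_of_lt_one (norm_nonneg q) hr1] at this
  have hIcc : ∀ m : ℕ, ∑ i ∈ Finset.Icc 1 m, ‖q‖ ^ i ≤ ‖q‖ * (1 - ‖q‖)⁻¹ := by
    intro m
    rw [← Finset.Ico_add_one_right_eq_Icc, Finset.sum_Ico_eq_sum_range]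
    calc ∑ i ∈ range (m + 1 - 1), ‖q‖ ^ (1 + i)
        = ‖q‖ * ∑ i ∈ range (m + 1 - 1), ‖q‖ ^ i := by
          rw [Finset.mul_sum]; exact Finset.sum_congr rfl fun i _ => by rw [pow_add, pow_one]
      _ ≤ ‖q‖ * (1 - ‖q‖)⁻¹ :=
          mul_le_mul_of_nonneg_left (hgeo _) (norm_nonneg q)
  have hlow : ∀ m : ℕ, c ≤ ‖cbrk z q m‖ := by
    intro m
    have h1 : ‖∑ i ∈ Finset.Icc 1 m, z * q ^ i‖ ≤ ‖z‖ * ‖q‖ * (1 - ‖q‖)⁻¹ := by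
      calc ‖∑ i ∈ Finset.Icc 1 m, z * q ^ i‖ ≤ ∑ i ∈ Finset.Icc 1 m, ‖z * q ^ i‖ :=
            norm_sum_le _ _
        _ = ‖z‖ * ∑ i ∈ Finset.Icc 1 m, ‖q‖ ^ i := by
            rw [Finset.mul_sum]
            exact Finset.sum_congr rfl fun i _ => by rw [norm_mul, norm_pow]
        _ ≤ ‖z‖ * (‖q‖ * (1 - ‖q‖)⁻¹) :=
            mul_le_mul_of_nonneg_left (hIcc m) (norm_nonneg z)
        _ = ‖z‖ * ‖q‖ * (1 - ‖q‖)⁻¹ := by ring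
    have h2 : (1:ℝ) - ‖∑ i ∈ Finset.Icc 1 m, z * q ^ i‖ ≤ ‖cbrk z q m‖ := by
      have := norm_sub_norm_le (1:ℂ) (∑ i ∈ Finset.Icc 1 m, z * q ^ i)
      simpa [cbrk] using this
    rw [hc_def]
    linarith
  have hne : ∀ m : ℕ, cbrk z q m ≠ 0 := by
    intro m he
    have := hlow m
    rw [he, norm_zero] at this
    linarith
  -- the factor function
  set t : ℕ+ → ℂ := fun i => -(z * q ^ (i : ℕ)) / cbrk z q ((i : ℕ) - 1) with ht_def
  set g : Finset ℕ+ → ℂ := fun S => ∏ i ∈ S, t i with hg_def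
  -- equivalence with finsets
  let e : Finset ℕ+ ≃ {s : Multiset ℕ+ // s.Nodup} :=
    ⟨fun S => ⟨S.val, S.nodup⟩, fun s => ⟨s.1, s.2⟩, fun _ => rfl, fun _ => rfl⟩
  have hfe : ∀ S : Finset ℕ+,
      ((-z) ^ Multiset.card ((e S : Multiset ℕ+)) *
          q ^ (((e S : Multiset ℕ+)).map fun i => (i : ℕ)).sum /
          (((e S : Multiset ℕ+)).map fun i => cbrk z q ((i : ℕ) - 1)).prod) = g S := by
    intro S
    have hcard : Multiset.card ((e S : Multiset ℕ+)) = S.card := rfl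
    have hsum : (((e S : Multiset ℕ+)).map fun i => (i : ℕ)).sum = ∑ i ∈ S, (i : ℕ) := by
      show (Multiset.map (fun i => i) (S.val.bind fun a => {(a : ℕ)})).sum = _
      rw [Multiset.map_id', Multiset.bind_singleton]
      rfl
    have hprod : (((e S : Multiset ℕ+)).map fun i => cbrk z q ((i : ℕ) - 1)).prod
        = ∏ i ∈ S, cbrk z q ((i : ℕ) - 1) := by
      show (Multiset.map (fun i => cbrk z q (i - 1)) (S.val.bind fun a => {(a : ℕ)})).prod = _
      rw [Multiset.bind_singleton, Multiset.map_map]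
      rfl
    rw [hcard, hsum, hprod, ← Finset.prod_const, ← Finset.prod_pow_eq_pow_sum,
      ← Finset.prod_mul_distrib, ← Finset.prod_div_distrib]
    exact Finset.prod_congr rfl fun i _ => by rw [ht_def]; ring
  -- norm bound on factors
  have hbt : ∀ i : ℕ+, ‖t i‖ ≤ ‖z‖ / c * ‖q‖ ^ (i : ℕ) := by
    intro i
    rw [ht_def]
    simp only [norm_div, norm_neg, norm_mul, norm_pow]
    calc ‖z‖ * ‖q‖ ^ (i:ℕ) / ‖cbrk z q ((i:ℕ) - 1)‖ ≤ ‖z‖ * ‖q‖ ^ (i:ℕ) / c :=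
          div_le_div_of_nonneg_left (by positivity) hc (hlow _)
      _ = ‖z‖ / c * ‖q‖ ^ (i:ℕ) := by ring
  have hbtnn : ∀ i : ℕ+, (0:ℝ) ≤ ‖t i‖ := fun i => norm_nonneg _
  -- summability
  have hsum_n : Summable (fun S : Finset ℕ+ => ∏ i ∈ S, ‖t i‖) := by
    apply summable_of_sum_le (c := Real.exp (‖z‖ / c * (1 - ‖q‖)⁻¹))
    · intro S
      exact Finset.prod_nonneg fun i _ => norm_nonneg _
    · intro u
      set T : Finset ℕ+ := u.sup id with hT
      have hsub : u ⊆ T.powerset := by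
        intro S hS
        exact Finset.mem_powerset.mpr (Finset.le_sup (f := id) hS)
      calc ∑ S ∈ u, ∏ i ∈ S, ‖t i‖
          ≤ ∑ S ∈ T.powerset, ∏ i ∈ S, ‖t i‖ := by
            apply Finset.sum_le_sum_of_subset_of_nonneg hsub
            intro S _ _
            exact Finset.prod_nonneg fun i _ => norm_nonneg _
        _ = ∏ i ∈ T, (‖t i‖ + 1) := by
            rw [Finset.prod_add]
            exact (Finset.sum_congr rfl fun S _ => by simp).symm
        _ ≤ ∏ i ∈ T, Real.exp ‖t i‖ := by
            apply Finset.prod_le_prod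
            · intro i _; positivity
            · intro i _; linarith [Real.add_one_le_exp ‖t i‖]
        _ = Real.exp (∑ i ∈ T, ‖t i‖) := by rw [Real.exp_sum]
        _ ≤ Real.exp (‖z‖ / c * (1 - ‖q‖)⁻¹) := by
            apply Real.exp_le_exp.mpr
            calc ∑ i ∈ T, ‖t i‖ ≤ ∑ i ∈ T, ‖z‖ / c * ‖q‖ ^ (i:ℕ) :=
                  Finset.sum_le_sum fun i _ => hbt i
              _ = ‖z‖ / c * ∑ i ∈ T, ‖q‖ ^ (i:ℕ) := by rw [Finset.mul_sum]
              _ = ‖z‖ / c * ∑ n ∈ T.image (fun i : ℕ+ => (i:ℕ)), ‖q‖ ^ n := by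
                  rw [Finset.sum_image (fun a _ b _ hab => PNat.coe_injective hab)]
              _ ≤ ‖z‖ / c * (1 - ‖q‖)⁻¹ := by
                  apply mul_le_mul_of_nonneg_left (hgeo _)
                  positivity
  have hsg : Summable g := by
    apply Summable.of_norm
    apply hsum_n.congr
    intro S
    rw [hg_def]
    exact (norm_prod _ _).symm
  -- telescoping limit
  have hkey : ∀ k : ℕ, 1 + t ⟨k + 1, k.succ_pos⟩ = cbrk z q (k + 1) / cbrk z q k := by
    intro k
    have hk : ((⟨k + 1, k.succ_pos⟩ : ℕ+) : ℕ) = k + 1 := rfl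
    rw [ht_def]
    simp only [hk, Nat.add_sub_cancel]
    rw [cbrk_succ z q k]
    field_simp [hne k]
    simp only [PNat.mk_coe]
    rw [show cbrk z q (k + 1 - 1) = cbrk z q k from congrArg _ (by omega)]
    ring
  have hprodtel : ∀ m : ℕ, ∏ k ∈ range m, (cbrk z q (k + 1) / cbrk z q k) = cbrk z q m := by
    intro m
    induction m with
    | zero => simp [cbrk_zero]
    | succ n ih =>
      rw [Finset.prod_range_succ, ih, mul_div_assoc', mul_comm, mul_div_assoc,
        div_self (hne n), mul_one]
  -- exhausting family
  set pe : ℕ → ℕ+ := fun k => ⟨k + 1, k.succ_pos⟩ with hpe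
  have hpe_inj : Function.Injective pe := by
    intro a b hab
    have h' : a + 1 = b + 1 := congrArg (fun x : ℕ+ => (x : ℕ)) hab
    omega
  set F : ℕ → Finset (Finset ℕ+) := fun m => ((range m).image pe).powerset with hF_def
  have hFmono : Monotone F := by
    intro a b hab
    exact Finset.powerset_mono.mpr (Finset.image_subset_image (Finset.range_subset_range.mpr hab))
  have hFexh : ∀ S : Finset ℕ+, ∃ m, S ∈ F m := by
    intro S
    refine ⟨S.sup (fun i : ℕ+ => (i : ℕ)), Finset.mem_powerset.mpr ?_⟩
    intro i hi
    apply Finset.mem_image.mpr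
    refine ⟨(i : ℕ) - 1, ?_, ?_⟩
    · apply Finset.mem_range.mpr
      have h1 : (i : ℕ) ≤ S.sup (fun i : ℕ+ => (i : ℕ)) := Finset.le_sup hi
      have h2 : 1 ≤ (i : ℕ) := i.2
      omega
    · apply PNat.coe_injective
      show (i : ℕ) - 1 + 1 = (i : ℕ)
      have h2 : 1 ≤ (i : ℕ) := i.2
      omega
  have hFtend : Tendsto F atTop atTop := by
    apply tendsto_atTop_finset_of_monotone hFmono
    intro S
    obtain ⟨m, hm⟩ := hFexh S
    exact ⟨m, hm⟩
  -- partial sums along F equal cbrk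
  have hpartial : ∀ m : ℕ, ∑ S ∈ F m, g S = cbrk z q m := by
    intro m
    rw [hF_def]
    calc ∑ S ∈ ((range m).image pe).powerset, g S
        = ∏ i ∈ (range m).image pe, (t i + 1) := by
          rw [Finset.prod_add]
          refine Finset.sum_congr rfl fun S _ => ?_
          simp [hg_def]
      _ = ∏ k ∈ range m, (t (pe k) + 1) := by
          rw [Finset.prod_image (fun a _ b _ hab => hpe_inj hab)]
      _ = ∏ k ∈ range m, (cbrk z q (k + 1) / cbrk z q k) :=
          Finset.prod_congr rfl fun k _ => by rw [add_comm]; exact hkey k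
      _ = cbrk z q m := hprodtel m
  -- limit of cbrk
  have hlim : Tendsto (fun m => cbrk z q m) atTop (𝓝 ((1 - q - z * q) / (1 - q))) := by
    have hq1 : (1:ℂ) - q ≠ 0 := by
      intro he
      have : q = 1 := by linear_combination -he
      rw [this] at hr1; simp at hr1
    have hgeoC : Tendsto (fun m => ∑ i ∈ range m, q ^ i) atTop (𝓝 (1 - q)⁻¹) :=
      (hasSum_geometric_of_norm_lt_one hr1).tendsto_sum_nat
    have hrw : ∀ m : ℕ, cbrk z q m = 1 - z * q * ∑ i ∈ range m, q ^ i := by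
      intro m
      rw [cbrk, ← Finset.Ico_add_one_right_eq_Icc, Finset.sum_Ico_eq_sum_range]
      congr 1
      rw [Finset.mul_sum]
      apply Finset.sum_congr rfl
      intro i _
      rw [pow_add, pow_one]
      ring
    have : Tendsto (fun m => 1 - z * q * ∑ i ∈ range m, q ^ i) atTop
        (𝓝 (1 - z * q * (1 - q)⁻¹)) :=
      tendsto_const_nhds.sub (tendsto_const_nhds.mul hgeoC)
    have heq : 1 - z * q * (1 - q)⁻¹ = (1 - q - z * q) / (1 - q) := by
      field_simp
    rw [← heq]
    exact this.congr fun m => (hrw m).symm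
  -- conclude
  have hgsumL : HasSum g ((1 - q - z * q) / (1 - q)) := by
    have h1 : Tendsto (fun m => ∑ S ∈ F m, g S) atTop (𝓝 (∑' S, g S)) :=
      hsg.hasSum.comp hFtend
    have h2 : Tendsto (fun m => ∑ S ∈ F m, g S) atTop (𝓝 ((1 - q - z * q) / (1 - q))) := by
      refine hlim.congr fun m => (hpartial m).symm
    have := tendsto_nhds_unique h1 h2
    rw [← this]
    exact hsg.hasSum
  rw [← Equiv.hasSum_iff e]
  have hcomp : ∀ S : Finset ℕ+,
      ((fun μ : {s : Multiset ℕ+ // s.Nodup} =>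
        (-z) ^ Multiset.card (μ : Multiset ℕ+) *
          q ^ ((μ : Multiset ℕ+).map fun i => (i : ℕ)).sum /
          ((μ : Multiset ℕ+).map fun i => cbrk z q ((i : ℕ) - 1)).prod) ∘ e) S = g S :=
    fun S => hfe S
  rw [show ((fun μ : {s : Multiset ℕ+ // s.Nodup} =>
        (-z) ^ Multiset.card (μ : Multiset ℕ+) *
          q ^ ((μ : Multiset ℕ+).map fun i => (i : ℕ)).sum /
          ((μ : Multiset ℕ+).map fun i => cbrk z q ((i : ℕ) - 1)).prod) ∘ e) = g from
    funext hcomp]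
  exact hgsumL
end

section
/- For z, q ∈ ℂ with |q| < 1/(1+|z|), the identity 1 + ∑_{n≥1} z·q^n/{zq;q}_n = ∑ z^{ℓ(c)} q^{|c|} holds, where the right-hand sum is over all integer compositions c = (c_1,...,c_r) (including the empty one) whose first part c_1 equals the largest part of c. -/
open Finset

section aux

lemma Icc_one_sum {M : Type*} [AddCommMonoid M] (f : ℕ → M) (m : ℕ) :
    ∑ i ∈ Icc 1 m, f i = ∑ i ∈ range m, f (i + 1) := by
  rw [← Finset.Ico_add_one_right_eq_Icc, Finset.sum_Ico_eq_sum_range]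
  simp [add_comm]

lemma sum_pi_prod {α : Type*} [Fintype α] {R : Type*} [CommSemiring R] (w : α → R) (n : ℕ) :
    ∑ f : Fin n → α, ∏ i, w (f i) = (∑ a, w a) ^ n := by
  classical
  have : (∑ a, w a) ^ n = ∏ _i : Fin n, ∑ a, w a := by
    simp [Finset.prod_const]
  rw [this, Finset.prod_univ_sum]
  simp [Fintype.piFinset_univ]

lemma hasSum_list_prod {α : Type*} [Fintype α] {𝕜 : Type*} [RCLike 𝕜] (w : α → 𝕜)
    (hw : ∑ a, ‖w a‖ < 1) :
    HasSum (fun l : List α => (l.map w).prod) (1 - ∑ a, w a)⁻¹ := by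
  classical
  set S := ∑ a, w a with hS
  set r := ∑ a, ‖w a‖ with hr
  have hr0 : 0 ≤ r := Finset.sum_nonneg fun a _ => norm_nonneg _
  have hSn : ‖S‖ < 1 := lt_of_le_of_lt (norm_sum_le _ _) hw
  set F : (Σ n : ℕ, Fin n → α) → 𝕜 := fun p => ∏ i, w (p.2 i) with hF
  -- summability of norms on the sigma type
  have hnorm : Summable fun p : Σ n : ℕ, Fin n → α => ‖F p‖ := by
    apply (summable_sigma_of_nonneg (fun p => norm_nonneg (F p))).mpr
    constructor
    · intro n; exact Summable.of_finite
    · have key : ∀ n : ℕ, (∑' f : Fin n → α, ‖F ⟨n, f⟩‖) = r ^ n := by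
        intro n
        rw [tsum_fintype]
        have : ∀ f : Fin n → α, ‖F ⟨n, f⟩‖ = ∏ i, ‖w (f i)‖ := by
          intro f; simp [hF, norm_prod]
        simp only [this]
        exact sum_pi_prod (fun a => ‖w a‖) n
      simp only [key]
      exact summable_geometric_of_lt_one hr0 hw
  have hFs : Summable F := Summable.of_norm hnorm
  have fib : ∀ n : ℕ, HasSum (fun f : Fin n → α => F ⟨n, f⟩) (S ^ n) := by
    intro n
    have := hasSum_fintype (fun f : Fin n → α => F ⟨n, f⟩)
    rwa [show ∑ f : Fin n → α, F ⟨n, f⟩ = S ^ n from sum_pi_prod w n] at this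
  have outer : HasSum (fun n : ℕ => S ^ n) (∑' p, F p) := hFs.hasSum.sigma fib
  have geo : HasSum (fun n : ℕ => S ^ n) (1 - S)⁻¹ := hasSum_geometric_of_norm_lt_one hSn
  have hFsum : HasSum F (1 - S)⁻¹ := by
    rw [← outer.unique geo]; exact hFs.hasSum
  have := (List.equivSigmaTuple (α := α)).hasSum_iff.mpr hFsum
  have heq : (F ∘ List.equivSigmaTuple) = fun l : List α => (l.map w).prod := by
    funext l
    have h0 : (F ∘ List.equivSigmaTuple) l = ∏ i, w (l.get i) := rfl
    rw [h0, ← List.prod_ofFn (f := fun i => w (l.get i))]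
    exact congrArg List.prod (List.ofFn_getElem_eq_map l w)
  rwa [heq] at this

/-- summation over an `Option` type -/
lemma hasSum_option' {M : Type*} [AddCommMonoid M] [TopologicalSpace M] [ContinuousAdd M]
    {β : Type*} (f : Option β → M) {a : M} (hf : HasSum (fun b => f (some b)) a) :
    HasSum f (f none + a) := by
  classical
  have h1 : HasSum (fun o : Option β => if o = none then f none else 0) (f none) :=
    hasSum_ite_eq none (f none)
  have h2 : HasSum (fun o : Option β => Option.elim o 0 (fun b => f (some b))) a := by
    apply ((Option.some_injective β).hasSum_iff ?_).mp
    · exact hf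
    · rintro (_ | x) hx
      · rfl
      · exact absurd ⟨x, rfl⟩ hx
  have h3 := h1.add h2
  convert h3 using 2 with o
  cases o <;> simp

end aux

section main

variable (z q : ℂ)

/-- weights on `Fin m` -/
noncomputable def wgt (m : ℕ) : Fin m → ℂ := fun i => z * q ^ ((i : ℕ) + 1)

lemma prod_wgt (m : ℕ) (l : List (Fin m)) :
    (l.map (wgt z q m)).prod
      = z ^ l.length * q ^ ((l.map fun j : Fin m => ((j : ℕ) + 1)).sum) := by
  induction l with
  | nil => simp
  | cons a t ih =>
      simp only [List.map_cons, List.prod_cons, List.length_cons, List.sum_cons, ih, wgt]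
      rw [pow_succ, pow_add]
      ring

lemma norm_prod_wgt (m : ℕ) (l : List (Fin m)) :
    ‖(l.map (wgt z q m)).prod‖
      = (l.map fun i : Fin m => ‖z‖ * ‖q‖ ^ ((i : ℕ) + 1)).prod := by
  induction l with
  | nil => simp
  | cons a t ih => simp [wgt, norm_mul, norm_pow, ih]

lemma sum_wgt (m : ℕ) : ∑ i : Fin m, wgt z q m i = 1 - cbrk z q m := by
  rw [cbrk]
  rw [show ∑ i : Fin m, wgt z q m i = ∑ i ∈ range m, z * q ^ (i + 1) from
    Fin.sum_univ_eq_sum_range (fun i => z * q ^ (i + 1)) m]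
  rw [Icc_one_sum (fun i => z * q ^ i) m]
  ring

lemma sum_norm_wgt (m : ℕ) :
    ∑ i : Fin m, ‖wgt z q m i‖ = ∑ i ∈ Icc 1 m, ‖z‖ * ‖q‖ ^ i := by
  have h1 : ∀ i : Fin m, ‖wgt z q m i‖ = ‖z‖ * ‖q‖ ^ ((i : ℕ) + 1) := by
    intro i; simp [wgt, norm_mul, norm_pow]
  simp only [h1]
  rw [show ∑ i : Fin m, ‖z‖ * ‖q‖ ^ ((i : ℕ) + 1) = ∑ i ∈ range m, ‖z‖ * ‖q‖ ^ (i + 1) from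
    Fin.sum_univ_eq_sum_range (fun i => ‖z‖ * ‖q‖ ^ (i + 1)) m]
  rw [Icc_one_sum (fun i => ‖z‖ * ‖q‖ ^ i) m]

end main

section equivdef

/-- forward map -/
def fwdC : {l : List ℕ+ // ∀ p ∈ l, p ≤ l.headI} → Option (Σ m : ℕ+, List (Fin (m : ℕ)))
  | ⟨[], _⟩ => none
  | ⟨h :: t, hl⟩ => some ⟨h, t.pmap
      (fun (p : ℕ+) (hp : p ≤ h) => (⟨(p : ℕ) - 1, by
        have h1 : 0 < (p : ℕ) := p.2
        have h2 : (p : ℕ) ≤ (h : ℕ) := hp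
        omega⟩ : Fin (h : ℕ)))
      (fun (p : ℕ+) hp => hl p (List.mem_cons_of_mem _ hp))⟩

/-- backward map -/
def bwdC : Option (Σ m : ℕ+, List (Fin (m : ℕ))) → {l : List ℕ+ // ∀ p ∈ l, p ≤ l.headI}
  | none => ⟨[], by simp⟩
  | some ⟨h, l⟩ =>
      ⟨h :: l.map (fun (j : Fin (h : ℕ)) => (⟨(j : ℕ) + 1, Nat.succ_pos _⟩ : ℕ+)), by
      intro p hp
      rcases List.mem_cons.mp hp with rfl | hp'
      · exact le_refl _
      · obtain ⟨j, _, rfl⟩ := List.mem_map.mp hp'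
        show ((⟨(j : ℕ) + 1, _⟩ : ℕ+) : ℕ) ≤ (((h :: _).headI : ℕ+) : ℕ)
        have hj := j.2
        show (j : ℕ) + 1 ≤ (h : ℕ)
        omega⟩

/-- the equivalence -/
def equivC : Option (Σ m : ℕ+, List (Fin (m : ℕ))) ≃ {l : List ℕ+ // ∀ p ∈ l, p ≤ l.headI} where
  toFun := bwdC
  invFun := fwdC
  left_inv o := by
    cases o with
    | none => rfl
    | some p =>
        obtain ⟨h, l⟩ := p
        show fwdC (bwdC (some ⟨h, l⟩)) = some ⟨h, l⟩
        simp only [bwdC, fwdC]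
        congr 1
        refine Sigma.ext rfl ?_
        simp only [heq_eq_eq]
        erw [List.pmap_map]
        calc List.pmap _ l _
            = List.pmap (fun (a : Fin (h : ℕ)) (_ : True) => a) l (fun _ _ => trivial) := by
              apply List.pmap_congr_left
              intro a _ h1 _
              apply Fin.ext
              simp
          _ = l := by rw [List.pmap_eq_map]; simp
  right_inv c := by
    obtain ⟨l, hl⟩ := c
    cases l with
    | nil => rfl
    | cons h t =>
        show bwdC (fwdC ⟨h :: t, hl⟩) = ⟨h :: t, hl⟩
        simp only [fwdC, bwdC]
        apply Subtype.ext
        simp only [List.cons.injEq, true_and]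
        erw [List.map_pmap]
        calc List.pmap _ t _
            = List.pmap (fun (a : ℕ+) (_ : True) => a) t (fun _ _ => trivial) := by
              apply List.pmap_congr_left
              intro p hp h1 _
              have hp1 : 0 < (p : ℕ) := p.2
              apply PNat.coe_injective
              show (p : ℕ) - 1 + 1 = (p : ℕ)
              omega
          _ = t := by rw [List.pmap_eq_map]; simp

end equivdef

set_option maxHeartbeats 1000000 in
/-- For `|q| < 1/(1+|z|)`:  `1 + ∑_{n≥1} z q^n/{zq;q}_n = ∑ z^{ℓ(c)} q^{|c|}`, the right-hand
sum over integer compositions (including the empty one) whose first part is the largest part. -/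
theorem composition_first_part_largest (z q : ℂ) (h : ‖q‖ < 1 / (1 + ‖z‖)) :
    HasSum
      (fun c : {l : List ℕ+ // ∀ p ∈ l, p ≤ l.headI} =>
        z ^ (c : List ℕ+).length * q ^ ((c : List ℕ+).map fun p => (p : ℕ)).sum)
      (1 + ∑' n : ℕ, z * q ^ (n + 1) / cbrk z q (n + 1)) := by
  classical
  have hclean : (fun c : {l : List ℕ+ // ∀ p ∈ l, p ≤ l.headI} =>
      z ^ (c : List ℕ+).length * q ^ ((c : List ℕ+).map fun p => (p : ℕ)).sum)
      = fun c : {l : List ℕ+ // ∀ p ∈ l, p ≤ l.headI} =>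
        z ^ (c : List ℕ+).length * q ^ ((c : List ℕ+).map (fun p : ℕ+ => (p : ℕ))).sum := by
    funext c
    have : ((c : List ℕ+).map fun p => (p : ℕ)).sum
        = ((c : List ℕ+).map (fun p : ℕ+ => (p : ℕ))).sum := by
      congr 1
      induction (c : List ℕ+) with
      | nil => rfl
      | cons a t ih => simp_all [List.flatMap_cons]
    rw [this]
  rw [hclean]
  have hz0 : (0 : ℝ) ≤ ‖z‖ := norm_nonneg z
  have hq0 : (0 : ℝ) ≤ ‖q‖ := norm_nonneg q
  have hpos : (0 : ℝ) < 1 + ‖z‖ := by linarith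
  have hqz : ‖q‖ * (1 + ‖z‖) < 1 := (lt_div_iff₀ hpos).mp h
  have hq1 : ‖q‖ < 1 := by nlinarith
  have h1q : (0 : ℝ) < 1 - ‖q‖ := by linarith
  set c : ℝ := ‖z‖ * ‖q‖ / (1 - ‖q‖) with hc
  have hc0 : 0 ≤ c := div_nonneg (by positivity) (le_of_lt h1q)
  have hc1 : c < 1 := by
    rw [hc, div_lt_one h1q]; nlinarith
  have h1c : (0 : ℝ) < 1 - c := by linarith
  -- the partial geometric sums are bounded by c
  have hrho : ∀ m : ℕ, ∑ i ∈ Icc 1 m, ‖z‖ * ‖q‖ ^ i ≤ c := by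
    intro m
    have h1 : ∑ i ∈ Icc 1 m, ‖z‖ * ‖q‖ ^ i = ‖z‖ * ‖q‖ * ∑ i ∈ range m, ‖q‖ ^ i := by
      rw [Icc_one_sum (fun i => ‖z‖ * ‖q‖ ^ i) m, Finset.mul_sum]
      apply Finset.sum_congr rfl
      intro i _
      rw [pow_succ]
      ring
    have h2 : ∑ i ∈ range m, ‖q‖ ^ i ≤ (1 - ‖q‖)⁻¹ := by
      have := (summable_geometric_of_lt_one hq0 hq1).sum_le_tsum (range m)
        (fun i _ => pow_nonneg hq0 i)
      rwa [tsum_geometric_of_lt_one hq0 hq1] at this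
    rw [h1, hc, div_eq_mul_inv]
    exact mul_le_mul_of_nonneg_left h2 (by positivity)
  have heqm : ∀ m : ℕ, ∑ i : Fin m, ‖z‖ * ‖q‖ ^ ((i : ℕ) + 1)
      = ∑ i ∈ Icc 1 m, ‖z‖ * ‖q‖ ^ i := by
    intro m
    rw [show ∑ i : Fin m, ‖z‖ * ‖q‖ ^ ((i : ℕ) + 1) = ∑ i ∈ range m, ‖z‖ * ‖q‖ ^ (i + 1) from
      Fin.sum_univ_eq_sum_range (fun i => ‖z‖ * ‖q‖ ^ (i + 1)) m]
    rw [Icc_one_sum (fun i => ‖z‖ * ‖q‖ ^ i) m]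
  have hwlt : ∀ m : ℕ, ∑ i : Fin m, ‖wgt z q m i‖ < 1 := by
    intro m
    rw [sum_norm_wgt]
    exact lt_of_le_of_lt (hrho m) hc1
  -- complex fiber sums
  have Gm : ∀ m : ℕ, HasSum (fun l : List (Fin m) => (l.map (wgt z q m)).prod)
      (cbrk z q m)⁻¹ := by
    intro m
    have := hasSum_list_prod (wgt z q m) (hwlt m)
    rwa [sum_wgt, sub_sub_cancel] at this
  -- real fiber sums
  have Gr : ∀ m : ℕ, HasSum (fun l : List (Fin m) =>
      (l.map fun i : Fin m => ‖z‖ * ‖q‖ ^ ((i : ℕ) + 1)).prod)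
      ((1 - ∑ i ∈ Icc 1 m, ‖z‖ * ‖q‖ ^ i)⁻¹) := by
    intro m
    have hs : ∑ i : Fin m, ‖(‖z‖ * ‖q‖ ^ ((i : ℕ) + 1) : ℝ)‖ < 1 := by
      have hww : ∀ i : Fin m, ‖(‖z‖ * ‖q‖ ^ ((i : ℕ) + 1) : ℝ)‖ = ‖z‖ * ‖q‖ ^ ((i : ℕ) + 1) :=
        fun i => Real.norm_of_nonneg (by positivity)
      simp only [hww]
      rw [heqm m]
      exact lt_of_le_of_lt (hrho m) hc1
    have := hasSum_list_prod (𝕜 := ℝ) (fun i : Fin m => ‖z‖ * ‖q‖ ^ ((i : ℕ) + 1)) hs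
    rwa [heqm m] at this
  -- the function on the sigma type
  set F : (Σ m : ℕ+, List (Fin ((m : ℕ)))) → ℂ :=
    fun p => z * q ^ ((p.1 : ℕ)) * (p.2.map (wgt z q (p.1 : ℕ))).prod with hF
  have normF : ∀ p : Σ m : ℕ+, List (Fin ((m : ℕ))), ‖F p‖ =
      ‖z‖ * ‖q‖ ^ ((p.1 : ℕ))
        * (p.2.map fun i : Fin ((p.1 : ℕ)) => ‖z‖ * ‖q‖ ^ ((i : ℕ) + 1)).prod := by
    intro p
    rw [hF]
    simp only
    rw [norm_mul, norm_mul, norm_pow, norm_prod_wgt]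
  -- summability of F
  have hFsummable : Summable F := by
    apply Summable.of_norm
    apply (summable_sigma_of_nonneg (fun p => norm_nonneg (F p))).mpr
    constructor
    · intro m
      apply Summable.congr (((Gr (m : ℕ)).mul_left (‖z‖ * ‖q‖ ^ ((m : ℕ)))).summable)
      intro l
      exact (normF ⟨m, l⟩).symm
    · have hb : Summable (fun m : ℕ+ => (‖z‖ * (1 - c)⁻¹) * ‖q‖ ^ ((m : ℕ))) := by
        have hgeo : Summable (fun n : ℕ => (‖z‖ * (1 - c)⁻¹) * ‖q‖ ^ (n + 1)) :=
          (((summable_nat_add_iff 1).mpr (summable_geometric_of_lt_one hq0 hq1)).mul_left _)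
        apply (Equiv.pnatEquivNat.symm.summable_iff).mp
        apply Summable.congr hgeo
        intro n
        simp [Equiv.pnatEquivNat]
      apply Summable.of_nonneg_of_le (fun m => tsum_nonneg (fun l => norm_nonneg (F ⟨m, l⟩)))
        ?_ hb
      intro m
      have ht : ∑' l : List (Fin ((m : ℕ))), ‖F ⟨m, l⟩‖ =
          ‖z‖ * ‖q‖ ^ ((m : ℕ)) * (1 - ∑ i ∈ Icc 1 (m : ℕ), ‖z‖ * ‖q‖ ^ i)⁻¹ := by
        rw [← ((Gr (m : ℕ)).mul_left (‖z‖ * ‖q‖ ^ ((m : ℕ)))).tsum_eq]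
        apply tsum_congr
        intro l
        exact normF ⟨m, l⟩
      rw [ht]
      have hmono : (1 - ∑ i ∈ Icc 1 (m : ℕ), ‖z‖ * ‖q‖ ^ i)⁻¹ ≤ (1 - c)⁻¹ := by
        apply inv_anti₀ h1c
        have := hrho (m : ℕ)
        linarith
      calc ‖z‖ * ‖q‖ ^ ((m : ℕ)) * (1 - ∑ i ∈ Icc 1 (m : ℕ), ‖z‖ * ‖q‖ ^ i)⁻¹
          ≤ ‖z‖ * ‖q‖ ^ ((m : ℕ)) * (1 - c)⁻¹ :=
            mul_le_mul_of_nonneg_left hmono (by positivity)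
        _ = (‖z‖ * (1 - c)⁻¹) * ‖q‖ ^ ((m : ℕ)) := by ring
  -- the outer sum
  have outer : HasSum (fun m : ℕ+ => z * q ^ ((m : ℕ)) * (cbrk z q (m : ℕ))⁻¹) (∑' p, F p) := by
    apply hFsummable.hasSum.sigma
    intro m
    exact (Gm (m : ℕ)).mul_left _
  -- transport to ℕ
  have hcomp : ((fun m : ℕ+ => z * q ^ ((m : ℕ)) * (cbrk z q (m : ℕ))⁻¹) ∘
      Equiv.pnatEquivNat.symm) = fun n : ℕ => z * q ^ (n + 1) * (cbrk z q (n + 1))⁻¹ := by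
    funext n
    simp [Equiv.pnatEquivNat, Function.comp]
  have outerN : HasSum (fun n : ℕ => z * q ^ (n + 1) * (cbrk z q (n + 1))⁻¹) (∑' p, F p) := by
    have := (Equiv.pnatEquivNat.symm.hasSum_iff
      (f := fun m : ℕ+ => z * q ^ ((m : ℕ)) * (cbrk z q (m : ℕ))⁻¹)).mpr outer
    rwa [hcomp] at this
  have hT : ∑' n : ℕ, z * q ^ (n + 1) / cbrk z q (n + 1) = ∑' p, F p := by
    rw [← outerN.tsum_eq]
    apply tsum_congr
    intro n
    rw [div_eq_mul_inv]
  -- sum over the option type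
  set G : Option (Σ m : ℕ+, List (Fin ((m : ℕ)))) → ℂ := fun o => Option.elim o 1 F with hG
  have hGsum : HasSum G (1 + ∑' p, F p) := by
    have h2 : HasSum (fun b => G (some b)) (∑' p, F p) := hFsummable.hasSum
    have := hasSum_option' G h2
    simpa [hG] using this
  -- transfer along the equivalence
  rw [hT]
  apply (equivC.hasSum_iff).mp
  have hfe : ((fun c : {l : List ℕ+ // ∀ p ∈ l, p ≤ l.headI} =>
      z ^ (c : List ℕ+).length * q ^ ((c : List ℕ+).map (fun p : ℕ+ => (p : ℕ))).sum) ∘ equivC)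
      = G := by
    funext o
    cases o with
    | none => simp [equivC, bwdC, hG]
    | some p =>
        obtain ⟨m, l⟩ := p
        show z ^ (bwdC (some ⟨m, l⟩) : List ℕ+).length *
          q ^ ((bwdC (some ⟨m, l⟩) : List ℕ+).map (fun p : ℕ+ => (p : ℕ))).sum = F ⟨m, l⟩
        have hsum : ((l.map (fun (j : Fin ((m : ℕ))) =>
            (⟨(j : ℕ) + 1, Nat.succ_pos _⟩ : ℕ+))).map (fun p : ℕ+ => (p : ℕ))).sum
            = (l.map (fun j : Fin ((m : ℕ)) => ((j : ℕ) + 1))).sum := by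
          induction l with
          | nil => rfl
          | cons a t ih => exact congrArg (fun x => (a : ℕ) + 1 + x) ih
        simp only [bwdC]
        rw [hF]
        simp only [List.length_cons, List.map_cons, List.sum_cons, List.length_map]
        rw [prod_wgt]
        erw [hsum]
        rw [pow_succ, pow_add]
        erw [List.length_map]
        ring
  rw [hfe]
  exact hGsum
end

section
/- For z, q ∈ ℂ with |q| < 1/(1+|z|), the identity 1 + ∑_{n≥1} z·q^n/(zq;q)_n = ∑_{λ ∈ P} z^{ℓ(λ)} q^{|λ|} holds, where (zq;q)_n = ∏_{k=0}^{n-1}(1 − z·q^{k+1}), and the right-hand sum is over all integer partitions λ including the empty partition. -/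
open Finset

namespace PLPG

/-- largest part of a multiset of positive integers (0 if empty) -/
def B (μ : Multiset ℕ+) : ℕ := (μ.map (fun i : ℕ+ => (i : ℕ))).sup

lemma le_B {μ : Multiset ℕ+} {x : ℕ+} (hx : x ∈ μ) : (x : ℕ) ≤ B μ :=
  Multiset.le_sup (Multiset.mem_map_of_mem _ hx)

lemma B_eq_zero {μ : Multiset ℕ+} (h : B μ = 0) : μ = 0 := by
  refine Multiset.eq_zero_of_forall_notMem fun x hx => ?_
  have h1 := le_B hx
  have h2 := x.pos
  omega

lemma sup_mem_of_ne_zero : ∀ {s : Multiset ℕ}, s ≠ 0 → s.sup ∈ s := by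
  intro s
  induction s using Multiset.induction_on with
  | empty => simp
  | cons a s ih =>
    intro _
    rw [Multiset.sup_cons]
    rcases eq_or_ne s 0 with rfl | hs
    · simp
    · rcases le_total a s.sup with h | h
      · rw [sup_eq_right.2 h]
        exact Multiset.mem_cons_of_mem (ih hs)
      · rw [sup_eq_left.2 h]
        exact Multiset.mem_cons_self _ _

def top (m : ℕ) : ℕ+ := ⟨m + 1, Nat.succ_pos m⟩

@[simp] lemma coe_top (m : ℕ) : ((top m : ℕ+) : ℕ) = m + 1 := rfl

lemma mem_of_B_eq {μ : Multiset ℕ+} {m : ℕ} (h : B μ = m + 1) : top m ∈ μ := by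
  have hne : μ ≠ 0 := by
    rintro rfl
    simp [B] at h
  have hne' : μ.map (fun i : ℕ+ => (i : ℕ)) ≠ 0 := by simpa using hne
  have hmem := sup_mem_of_ne_zero hne'
  rw [show (μ.map fun i : ℕ+ => (i:ℕ)).sup = m + 1 from h] at hmem
  obtain ⟨x, hx, hxe⟩ := Multiset.mem_map.1 hmem
  have : x = top m := by
    apply PNat.coe_injective
    simpa using hxe
  exact this ▸ hx

def emb (m : ℕ) (i : Fin m) : ℕ+ := ⟨(i : ℕ) + 1, Nat.succ_pos _⟩

@[simp] lemma coe_emb (m : ℕ) (i : Fin m) : ((emb m i : ℕ+) : ℕ) = (i : ℕ) + 1 := rfl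

lemma emb_inj (m : ℕ) : Function.Injective (emb m) := by
  intro a b hab
  have : (a : ℕ) + 1 = (b : ℕ) + 1 := congrArg (fun x : ℕ+ => (x : ℕ)) hab
  exact Fin.ext (by omega)

noncomputable def toM (m : ℕ) (v : Fin m → ℕ) : Multiset ℕ+ :=
  ((Finsupp.equivFunOnFinite.symm v).toMultiset).map (emb m)

lemma count_toM (m : ℕ) (v : Fin m → ℕ) (i : Fin m) :
    (toM m v).count (emb m i) = v i := by
  rw [toM, Multiset.count_map_eq_count' _ _ (emb_inj m), Finsupp.count_toMultiset]
  simp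

lemma mem_toM {m : ℕ} {v : Fin m → ℕ} {x : ℕ+} (hx : x ∈ toM m v) : (x : ℕ) ≤ m := by
  obtain ⟨i, _, rfl⟩ := Multiset.mem_map.1 hx
  have := i.isLt
  rw [coe_emb]
  omega

lemma prod_toM {M : Type*} [CommMonoid M] (m : ℕ) (v : Fin m → ℕ) (h : ℕ+ → M) :
    ((toM m v).map h).prod = ∏ i : Fin m, h (emb m i) ^ v i := by
  rw [toM, Multiset.map_map]
  set ν := Finsupp.toMultiset (Finsupp.equivFunOnFinite.symm v) with hν
  rw [Finset.prod_multiset_map_count]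
  rw [Finset.prod_subset (Finset.subset_univ ν.toFinset)]
  · apply Finset.prod_congr rfl
    intro i _
    rw [hν, Finsupp.count_toMultiset]
    simp
  · intro i _ hi
    rw [Multiset.count_eq_zero_of_notMem (by simpa using hi)]
    simp

lemma prod_eq {M : Type*} [CommSemiring M] (Z Q : M) (μ : Multiset ℕ+) :
    Z ^ Multiset.card μ * Q ^ (μ.map (fun i : ℕ+ => (i : ℕ))).sum
      = (μ.map (fun i : ℕ+ => Z * Q ^ (i : ℕ))).prod := by
  induction μ using Multiset.induction_on with
  | empty => simp
  | cons a s ih =>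
    simp only [Multiset.map_cons, Multiset.prod_cons, Multiset.card_cons, Multiset.sum_cons]
    rw [pow_succ, pow_add, ← ih]
    ring

end PLPG

namespace PLPG

lemma B_cons_toM (m : ℕ) (v : Fin (m + 1) → ℕ) : B (top m ::ₘ toM (m + 1) v) = m + 1 := by
  rw [B, Multiset.map_cons, Multiset.sup_cons, coe_top]
  have hle : ((toM (m + 1) v).map (fun i : ℕ+ => (i : ℕ))).sup ≤ m + 1 := by
    apply Multiset.sup_le.2
    intro b hb
    obtain ⟨x, hx, rfl⟩ := Multiset.mem_map.1 hb
    exact mem_toM hx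
  exact sup_eq_left.2 hle

noncomputable def fiberEquiv (m : ℕ) : (Fin (m + 1) → ℕ) ≃ {μ : Multiset ℕ+ // B μ = m + 1} where
  toFun v := ⟨top m ::ₘ toM (m + 1) v, B_cons_toM m v⟩
  invFun μ := fun i => (μ.val.erase (top m)).count (emb (m + 1) i)
  left_inv v := by
    funext i
    simp only [Multiset.erase_cons_head]
    exact count_toM (m + 1) v i
  right_inv := by
    rintro ⟨μ, hμ⟩
    have htop : top m ∈ μ := mem_of_B_eq hμ
    apply Subtype.ext
    dsimp only
    conv_rhs => rw [← Multiset.cons_erase htop]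
    congr 1
    set ν := μ.erase (top m) with hνdef
    have hν : ∀ x : ℕ+, x ∈ ν → (x : ℕ) ≤ m + 1 := fun x hx =>
      hμ ▸ le_B (Multiset.mem_of_mem_erase hx)
    refine Multiset.ext.2 fun a => ?_
    by_cases ha : (a : ℕ) ≤ m + 1
    · have hpos := a.pos
      obtain ⟨i, rfl⟩ : ∃ i : Fin (m + 1), emb (m + 1) i = a := by
        refine ⟨⟨(a : ℕ) - 1, by omega⟩, ?_⟩
        apply PNat.coe_injective
        rw [coe_emb]
        simp
        omega
      rw [count_toM]
    · rw [Multiset.count_eq_zero_of_notMem (fun h => ha (mem_toM h)),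
        Multiset.count_eq_zero_of_notMem (fun h => ha (hν a h))]

end PLPG

namespace PLPG

lemma hasSum_pi_geom : ∀ (m : ℕ) (c : Fin m → ℂ), (∀ i, ‖c i‖ < 1) →
    HasSum (fun v : Fin m → ℕ => ∏ i, c i ^ v i) (∏ i, (1 - c i)⁻¹) ∧
      Summable (fun v : Fin m → ℕ => ‖∏ i, c i ^ v i‖) := by
  intro m
  induction m with
  | zero =>
    intro c _
    have h1 : (fun v : Fin 0 → ℕ => ∏ i, c i ^ v i) = fun _ => (1 : ℂ) := by
      funext v; simp
    have h2 : (fun v : Fin 0 → ℕ => ‖∏ i, c i ^ v i‖) = fun _ => ‖(1 : ℂ)‖ := by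
      funext v; simp
    constructor
    · rw [h1]
      have := hasSum_single (f := fun _ : Fin 0 → ℕ => (1 : ℂ)) default
        (fun b hb => absurd (Subsingleton.elim b default) hb)
      simpa using this
    · rw [h2]
      have := hasSum_single (f := fun _ : Fin 0 → ℕ => ‖(1 : ℂ)‖) default
        (fun b hb => absurd (Subsingleton.elim b default) hb)
      exact this.summable
  | succ m ih =>
    intro c hc
    obtain ⟨ihs, ihn⟩ := ih (fun i => c i.succ) (fun i => hc i.succ)
    have h0 := hasSum_geometric_of_norm_lt_one (hc 0)
    have h0n : Summable (fun k : ℕ => ‖c 0 ^ k‖) := by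
      simp only [norm_pow]
      exact summable_geometric_of_lt_one (norm_nonneg _) (hc 0)
    have hprodsum : Summable (fun p : ℕ × (Fin m → ℕ) => c 0 ^ p.1 * ∏ i, c (Fin.succ i) ^ p.2 i) :=
      summable_mul_of_summable_norm (f := fun k : ℕ => c 0 ^ k)
        (g := fun w : Fin m → ℕ => ∏ i, c (Fin.succ i) ^ w i) h0n ihn
    have hmul := h0.mul ihs hprodsum
    have hfun : ∀ v : Fin (m+1) → ℕ,
        (∏ i, c i ^ v i) = c 0 ^ v 0 * ∏ i : Fin m, c i.succ ^ v i.succ := by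
      intro v
      rw [Fin.prod_univ_succ]
    constructor
    · have := (Fin.consEquiv (fun _ : Fin (m+1) => ℕ)).symm.hasSum_iff.2 hmul
      have heq : ((fun p : ℕ × (Fin m → ℕ) => c 0 ^ p.1 * ∏ i, c (Fin.succ i) ^ p.2 i) ∘
          (Fin.consEquiv (fun _ : Fin (m+1) => ℕ)).symm) = fun v : Fin (m+1) → ℕ => ∏ i, c i ^ v i := by
        funext v
        show c 0 ^ v 0 * _ = _
        rw [hfun v]
        congr 1
      rw [heq] at this
      rw [Fin.prod_univ_succ]
      exact this
    · have hns : Summable (fun p : ℕ × (Fin m → ℕ) => ‖c 0 ^ p.1‖ * ‖∏ i, c (Fin.succ i) ^ p.2 i‖) := by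
        apply summable_mul_of_summable_norm (f := fun k : ℕ => ‖c 0 ^ k‖)
          (g := fun w : Fin m → ℕ => ‖∏ i, c (Fin.succ i) ^ w i‖)
        · simpa only [norm_norm] using h0n
        · simpa only [norm_norm] using ihn
      have := (Fin.consEquiv (fun _ : Fin (m+1) => ℕ)).symm.summable_iff.2 hns
      refine this.congr fun v => ?_
      show ‖c 0 ^ v 0‖ * _ = _
      rw [hfun v, norm_mul]
      congr 1

lemma ennreal_tsum_pi : ∀ (m : ℕ) (c : Fin m → ENNReal),
    ∑' v : Fin m → ℕ, ∏ i, c i ^ v i = ∏ i, ∑' k : ℕ, c i ^ k := by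
  intro m
  induction m with
  | zero =>
    intro c
    rw [tsum_eq_single default (fun b hb => absurd (Subsingleton.elim b default) hb)]
    simp
  | succ m ih =>
    intro c
    have key : ∀ p : ℕ × (Fin m → ℕ),
        (∏ i, c i ^ ((Fin.consEquiv (fun _ : Fin (m+1) => ℕ)).symm.symm p : Fin (m+1) → ℕ) i)
          = c 0 ^ p.1 * ∏ i : Fin m, c i.succ ^ p.2 i := by
      intro p
      rw [Fin.prod_univ_succ]
      simp
    calc ∑' v : Fin (m+1) → ℕ, ∏ i, c i ^ v i
        = ∑' p : ℕ × (Fin m → ℕ), ∏ i, c i ^ ((Fin.consEquiv (fun _ : Fin (m+1) => ℕ)).symm.symm p : Fin (m+1) → ℕ) i :=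
          ((Fin.consEquiv (fun _ : Fin (m+1) => ℕ)).symm.symm.tsum_eq _).symm
      _ = ∑' p : ℕ × (Fin m → ℕ), c 0 ^ p.1 * ∏ i : Fin m, c i.succ ^ p.2 i := tsum_congr key
      _ = (∑' k : ℕ, c 0 ^ k) * ∑' w : Fin m → ℕ, ∏ i, c i.succ ^ w i := by
          rw [ENNReal.tsum_prod']
          simp_rw [ENNReal.tsum_mul_left]
          rw [ENNReal.tsum_mul_right]
      _ = ∏ i : Fin (m+1), ∑' k : ℕ, c i ^ k := by
          rw [ih (fun i => c i.succ), ← Fin.prod_univ_succ (fun i => ∑' k : ℕ, c i ^ k)]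

end PLPG

namespace PLPG

open ENNReal in
lemma summable_f (z q : ℂ) (hqzq : ‖q‖ + ‖z‖ * ‖q‖ < 1) :
    Summable (fun μ : Multiset ℕ+ =>
      z ^ Multiset.card μ * q ^ (μ.map (fun i : ℕ+ => (i : ℕ))).sum) := by
  classical
  set b : ℝ≥0∞ := (‖z‖₊ : ℝ≥0∞) with hb
  set a : ℝ≥0∞ := (‖q‖₊ : ℝ≥0∞) with ha
  have hbt : b ≠ ⊤ := ENNReal.coe_ne_top
  have hsum1 : a + b * a < 1 := by
    have h1 : (‖q‖₊ + ‖z‖₊ * ‖q‖₊ : NNReal) < 1 := by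
      rw [← NNReal.coe_lt_coe]
      push_cast
      simpa [coe_nnnorm] using hqzq
    have h2 : a + b * a = ((‖q‖₊ + ‖z‖₊ * ‖q‖₊ : NNReal) : ℝ≥0∞) := by
      rw [ENNReal.coe_add, ENNReal.coe_mul]
    rw [h2]
    exact_mod_cast h1
  have hba : b * a < 1 := lt_of_le_of_lt le_add_self hsum1
  have ha1 : a < 1 := lt_of_le_of_lt le_self_add hsum1
  set C : ℝ≥0∞ := (1 - b * a)⁻¹ with hC
  have hCne : (1 : ℝ≥0∞) - b * a ≠ 0 := (tsub_pos_of_lt hba).ne'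
  have hCt : C ≠ ⊤ := ENNReal.inv_ne_top.2 hCne
  have haC : a * C < 1 := by
    rw [hC, ← div_eq_mul_inv]
    have hnt : (1 : ℝ≥0∞) - b * a ≠ ⊤ := ne_top_of_le_ne_top one_ne_top tsub_le_self
    refine (ENNReal.div_lt_iff (Or.inl hCne) (Or.inl hnt)).2 ?_
    rw [one_mul]
    exact lt_tsub_iff_right.2 hsum1
  set fE : ℕ+ → ℝ≥0∞ := fun i => b * a ^ (i : ℕ) with hfE
  apply Summable.of_nnnorm
  rw [← ENNReal.tsum_coe_ne_top_iff_summable]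
  have hFeq : ∀ μ : Multiset ℕ+,
      ((‖z ^ Multiset.card μ * q ^ (μ.map (fun i : ℕ+ => (i : ℕ))).sum‖₊ : NNReal) : ℝ≥0∞)
        = (μ.map fE).prod := by
    intro μ
    rw [hfE, ← prod_eq]
    simp [nnnorm_mul, nnnorm_pow, ENNReal.coe_mul, ENNReal.coe_pow, hb, ha]
  rw [tsum_congr hFeq]
  have hdec : (∑' μ : Multiset ℕ+, (μ.map fE).prod)
      = ∑' (n : ℕ), ∑' (μ : {μ : Multiset ℕ+ // B μ = n}), ((μ : Multiset ℕ+).map fE).prod := by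
    rw [← Equiv.tsum_eq (Equiv.sigmaFiberEquiv B) (fun μ => (μ.map fE).prod)]
    exact ENNReal.tsum_sigma
      (fun n (μ : {μ : Multiset ℕ+ // B μ = n}) => ((μ : Multiset ℕ+).map fE).prod)
  rw [hdec]
  have hf0 : (∑' (μ : {μ : Multiset ℕ+ // B μ = 0}), ((μ : Multiset ℕ+).map fE).prod) = 1 := by
    have hB0 : B 0 = 0 := by simp [B]
    rw [tsum_eq_single (⟨0, hB0⟩ : {μ : Multiset ℕ+ // B μ = 0})
      (fun b' hb' => absurd (Subtype.ext (B_eq_zero b'.2)) hb')]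
    simp
  have hfs : ∀ m : ℕ, (∑' (μ : {μ : Multiset ℕ+ // B μ = m + 1}), ((μ : Multiset ℕ+).map fE).prod)
      ≤ b * (a * C) ^ (m + 1) := by
    intro m
    rw [← Equiv.tsum_eq (fiberEquiv m)]
    have hval : ∀ v : Fin (m + 1) → ℕ,
        (((fiberEquiv m v : {μ : Multiset ℕ+ // B μ = m + 1}) : Multiset ℕ+).map fE).prod
          = (b * a ^ (m + 1)) * ∏ i : Fin (m + 1), (b * a ^ ((i : ℕ) + 1)) ^ v i := by
      intro v
      show ((top m ::ₘ toM (m + 1) v).map fE).prod = _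
      rw [Multiset.map_cons, Multiset.prod_cons, prod_toM]
      rfl
    calc (∑' v : Fin (m + 1) → ℕ,
            (((fiberEquiv m v : {μ : Multiset ℕ+ // B μ = m + 1}) : Multiset ℕ+).map fE).prod)
        = (b * a ^ (m + 1)) * ∑' v : Fin (m + 1) → ℕ, ∏ i : Fin (m + 1), (b * a ^ ((i : ℕ) + 1)) ^ v i := by
          rw [tsum_congr hval, ENNReal.tsum_mul_left]
      _ = (b * a ^ (m + 1)) * ∏ i : Fin (m + 1), ∑' k : ℕ, (b * a ^ ((i : ℕ) + 1)) ^ k := by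
          rw [ennreal_tsum_pi]
      _ ≤ (b * a ^ (m + 1)) * ∏ _i : Fin (m + 1), C := by
          apply mul_le_mul_right
          apply Finset.prod_le_prod'
          intro i _
          have hle : b * a ^ ((i : ℕ) + 1) ≤ b * a :=
            mul_le_mul_right ((pow_le_pow_of_le_one (zero_le) ha1.le (by omega)).trans_eq
              (pow_one a)) b
          calc (∑' k : ℕ, (b * a ^ ((i : ℕ) + 1)) ^ k)
              ≤ ∑' k : ℕ, (b * a) ^ k :=
                ENNReal.tsum_le_tsum (fun k => pow_le_pow_left₀ (zero_le) hle k)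
            _ = C := by rw [ENNReal.tsum_geometric]
      _ = b * (a * C) ^ (m + 1) := by
          rw [Finset.prod_const, Finset.card_univ, Fintype.card_fin, mul_pow, mul_assoc]
  have htotle : (∑' (n : ℕ), ∑' (μ : {μ : Multiset ℕ+ // B μ = n}), ((μ : Multiset ℕ+).map fE).prod)
      ≤ ∑' n : ℕ, (1 + b) * (a * C) ^ n := by
    apply ENNReal.tsum_le_tsum
    intro n
    match n with
    | 0 => rw [hf0]; simp
    | (m + 1) =>
      refine (hfs m).trans ?_
      exact mul_le_mul_left (le_add_self) _
  apply ne_top_of_le_ne_top _ htotle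
  rw [ENNReal.tsum_mul_left, ENNReal.tsum_geometric]
  exact (ENNReal.mul_lt_top (by simp [hbt, lt_top_iff_ne_top]) (ENNReal.inv_lt_top.2 (tsub_pos_of_lt haC))).ne

end PLPG

namespace PLPG

lemma stmt_eq (z q : ℂ) :
    (fun μ : Multiset ℕ+ => z ^ Multiset.card μ * q ^ (μ.map fun i => (i : ℕ)).sum)
      = (fun μ : Multiset ℕ+ =>
          z ^ Multiset.card μ * q ^ (μ.map (fun i : ℕ+ => (i : ℕ))).sum) := by
  funext μ
  congr 2
  induction μ using Multiset.induction_on with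
  | empty => rfl
  | cons a s ih => simp [Multiset.cons_bind, ih, bind, pure]

end PLPG


open PLPG in

/-- For `|q| < 1/(1+|z|)`:  `1 + ∑_{n≥1} z q^n/(zq;q)_n = ∑_{λ ∈ 𝒫} z^{ℓ(λ)} q^{|λ|}`, the
right-hand sum over all integer partitions (multisets of positive integers) including the
empty one, where `(zq;q)_n = ∏_{k=0}^{n-1}(1 - z q^{k+1})`. -/
theorem partition_largest_part_gen (z q : ℂ) (h : ‖q‖ < 1 / (1 + ‖z‖)) :
    HasSum
      (fun μ : Multiset ℕ+ => z ^ Multiset.card μ * q ^ (μ.map fun i => (i : ℕ)).sum)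
      (1 + ∑' n : ℕ, z * q ^ (n + 1) / ∏ k ∈ Finset.range (n + 1), (1 - z * q ^ (k + 1))) := by
  classical
  rw [stmt_eq]
  set f : Multiset ℕ+ → ℂ :=
    fun μ => z ^ Multiset.card μ * q ^ (μ.map (fun i : ℕ+ => (i : ℕ))).sum with hf
  have hz1 : (0:ℝ) < 1 + ‖z‖ := by positivity
  have hkey : ‖q‖ * (1 + ‖z‖) < 1 := (lt_div_iff₀ hz1).1 h
  have hqzq : ‖q‖ + ‖z‖ * ‖q‖ < 1 := by nlinarith [norm_nonneg q, norm_nonneg z]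
  have hq1 : ‖q‖ < 1 := by nlinarith [norm_nonneg q, norm_nonneg z]
  have hzq : ‖z‖ * ‖q‖ < 1 := by nlinarith [norm_nonneg q, norm_nonneg z]
  have hc : ∀ k : ℕ, ‖z * q ^ (k + 1)‖ < 1 := by
    intro k
    rw [norm_mul, norm_pow]
    calc ‖z‖ * ‖q‖ ^ (k + 1) ≤ ‖z‖ * ‖q‖ := by
          apply mul_le_mul_of_nonneg_left _ (norm_nonneg z)
          exact (pow_le_pow_of_le_one (norm_nonneg q) hq1.le (by omega)).trans_eq (pow_one _)
      _ < 1 := hzq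
  have hsum : Summable f := summable_f z q hqzq
  have htot : HasSum f (∑' μ, f μ) := hsum.hasSum
  set g : ℕ → ℂ := fun n => Nat.casesOn n 1
    (fun m => (z * q ^ (m + 1)) * ∏ i : Fin (m + 1), (1 - z * q ^ ((i : ℕ) + 1))⁻¹) with hg
  have hfib : ∀ n : ℕ, HasSum (fun μ : {μ : Multiset ℕ+ // B μ = n} => f μ.val) (g n) := by
    intro n
    match n with
    | 0 =>
      have hB0 : B 0 = 0 := by simp [B]
      have := hasSum_single (f := fun μ : {μ : Multiset ℕ+ // B μ = 0} => f μ.val) ⟨0, hB0⟩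
        (fun b hb => absurd (Subtype.ext (B_eq_zero b.2)) hb)
      exact (by simpa [hf] using this : HasSum _ (1 : ℂ))
    | (m + 1) =>
      rw [← (fiberEquiv m).hasSum_iff]
      have hcomp : ((fun μ : {μ : Multiset ℕ+ // B μ = m + 1} => f μ.val) ∘ (fiberEquiv m))
          = fun v : Fin (m + 1) → ℕ =>
              (z * q ^ (m + 1)) * ∏ i : Fin (m + 1), (z * q ^ ((i : ℕ) + 1)) ^ v i := by
        funext v
        show f (top m ::ₘ toM (m + 1) v) = _
        rw [hf]
        dsimp only
        rw [prod_eq, Multiset.map_cons, Multiset.prod_cons, prod_toM]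
        rfl
      rw [hcomp]
      have hps := (hasSum_pi_geom (m + 1) (fun i => z * q ^ ((i : ℕ) + 1)) (fun i => hc i)).1
      exact hps.mul_left _
  have hg' : HasSum g (∑' μ, f μ) :=
    HasSum.sigma ((Equiv.sigmaFiberEquiv B).hasSum_iff.2 htot) hfib
  have hsplit : (∑' μ, f μ) = 1 + ∑' n : ℕ, g (n + 1) := by
    rw [← hg'.tsum_eq, Summable.tsum_eq_zero_add hg'.summable]
    rfl
  have hTn : ∀ n : ℕ, g (n + 1)
      = z * q ^ (n + 1) / ∏ k ∈ Finset.range (n + 1), (1 - z * q ^ (k + 1)) := by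
    intro n
    rw [hg]
    dsimp only
    rw [div_eq_mul_inv, ← Finset.prod_inv_distrib,
      ← Fin.prod_univ_eq_prod_range (fun k => (1 - z * q ^ (k + 1))⁻¹)]
  rw [hsplit, tsum_congr hTn] at htot
  exact htot
end
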